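/- Fix an integer ℓ > 2. A partition λ is a node of the ladder crystal B(Λ0)^L if and only if there does not exist a box (i,j) in the Young diagram of λ such that h_{(i,j)}^λ = ℓ · arm(i,j). Moreover, every L-partition is a node of B(Λ0)^L. -/

import Mathlib

noncomputable section

/-!
Common combinatorial definitions: partitions (English notation, rows indexed from 1),
Young diagrams, hooks, rim hooks, ladders, residues, crystal operators (classical and
ladder versions), locked boxes, regularization classes, dominance order.
-/

structure YPartition where
  part : ℕ → ℕ
  zero_at_zero : part 0 = 0
  antitone : ∀ i j : ℕ, 1 ≤ i → i ≤ j → part j ≤ part i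
  eventually_zero : ∃ N : ℕ, ∀ i : ℕ, N ≤ i → part i = 0

namespace YPartition

/-- The set of boxes of the Young diagram of `μ` (row, column), both indices ≥ 1. -/
def cells (μ : YPartition) : Set (ℕ × ℕ) :=
  {p | 1 ≤ p.1 ∧ 1 ≤ p.2 ∧ p.2 ≤ μ.part p.1}

/-- The length of column `b`: the number of rows containing a box in column `b`. -/
def colLen (μ : YPartition) (b : ℕ) : ℕ :=
  Nat.card {a : ℕ | 1 ≤ a ∧ b ≤ μ.part a}

/-- The arm of box `(a,b)`: boxes strictly to its right in its row. -/
def arm (μ : YPartition) (a b : ℕ) : ℕ := μ.part a - b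

/-- The leg of box `(a,b)`: boxes strictly below it in its column. -/
def leg (μ : YPartition) (a b : ℕ) : ℕ := μ.colLen b - a

/-- The hook length of the box `(a,b)`: arm + leg + 1. -/
def hook (μ : YPartition) (a b : ℕ) : ℕ := (μ.part a - b) + (μ.colLen b - a) + 1

/-- The number of boxes of `μ`. -/
def size (μ : YPartition) : ℕ := μ.cells.ncard

/-- The number of (nonzero) parts of `μ`. -/
def length (μ : YPartition) : ℕ := μ.colLen 1

/-- `μ` is an `(ℓ,0)`-JM partition: there are no boxes `(a,b)`, `(a,y)`, `(x,b)` with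
`ℓ ∣ hook (a,b)` while `ℓ` divides neither `hook (a,y)` nor `hook (x,b)`. -/
def IsJM (ℓ : ℕ) (μ : YPartition) : Prop :=
  ¬ ∃ a b y x : ℕ, (a, b) ∈ μ.cells ∧ (a, y) ∈ μ.cells ∧ (x, b) ∈ μ.cells ∧
    ℓ ∣ μ.hook a b ∧ ¬ ℓ ∣ μ.hook a y ∧ ¬ ℓ ∣ μ.hook x b

/-- Two boxes share an edge. -/
def BoxAdjacent (p q : ℕ × ℕ) : Prop :=
  (p.1 = q.1 ∧ (p.2 + 1 = q.2 ∨ q.2 + 1 = p.2)) ∨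
  (p.2 = q.2 ∧ (p.1 + 1 = q.1 ∨ q.1 + 1 = p.1))

/-- A set of boxes is connected (via shared edges, inside the set). -/
def SetConnected (S : Set (ℕ × ℕ)) : Prop :=
  ∀ p ∈ S, ∀ q ∈ S,
    Relation.ReflTransGen (fun x y => x ∈ S ∧ y ∈ S ∧ BoxAdjacent x y) p q

/-- `S` contains no 2 × 2 square of boxes. -/
def HasNoSquare (S : Set (ℕ × ℕ)) : Prop :=
  ¬ ∃ a b : ℕ, (a, b) ∈ S ∧ (a + 1, b) ∈ S ∧ (a, b + 1) ∈ S ∧ (a + 1, b + 1) ∈ S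

/-- `S` is a removable `ℓ`-rim hook of `μ`: a connected set of `ℓ` boxes of `μ` with no
2 × 2 square whose removal leaves the Young diagram of a partition. -/
def IsRimHook (ℓ : ℕ) (μ : YPartition) (S : Set (ℕ × ℕ)) : Prop :=
  S ⊆ μ.cells ∧ S.ncard = ℓ ∧ SetConnected S ∧ HasNoSquare S ∧
    ∃ ν : YPartition, ν.cells = μ.cells \ S

/-- `S` is contained in a single row. -/
def HorizontalHook (S : Set (ℕ × ℕ)) : Prop := ∃ a : ℕ, ∀ p ∈ S, p.1 = a

/-- `S` is contained in a single column. -/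
def VerticalHook (S : Set (ℕ × ℕ)) : Prop := ∃ b : ℕ, ∀ p ∈ S, p.2 = b

/-- Two sets of boxes are adjacent when some box of one shares an edge with a box of the other. -/
def SetsAdjacent (R S : Set (ℕ × ℕ)) : Prop := ∃ p ∈ R, ∃ q ∈ S, BoxAdjacent p q

/-- An `ℓ`-core: a partition with no removable `ℓ`-rim hook. -/
def IsCore (ℓ : ℕ) (μ : YPartition) : Prop := ¬ ∃ S : Set (ℕ × ℕ), IsRimHook ℓ μ S

/-- `p` and `q` lie on the same ladder: going down one column step the row increases
by `ℓ - 1`. -/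
def SameLadder (ℓ : ℕ) (p q : ℕ × ℕ) : Prop :=
  (q.1 : ℤ) - (p.1 : ℤ) = ((ℓ : ℤ) - 1) * ((p.2 : ℤ) - (q.2 : ℤ))

/-- The index of the ladder through `p`: the ladder through `(k,1)` has index `k`. -/
def ladderIdx (ℓ : ℕ) (p : ℕ × ℕ) : ℕ := p.1 + (ℓ - 1) * (p.2 - 1)

/-- The residue of position `(a,b)` is `b - a` mod `ℓ`. -/
def res (ℓ : ℕ) (p : ℕ × ℕ) : ℕ := (((p.2 : ℤ) - (p.1 : ℤ)) % (ℓ : ℤ)).toNat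

/-- `p` is a removable box of `μ`. -/
def Removable (μ : YPartition) (p : ℕ × ℕ) : Prop :=
  1 ≤ p.1 ∧ p.2 = μ.part p.1 ∧ μ.part (p.1 + 1) < p.2

/-- `p` is an addable box of `μ`. -/
def Addable (μ : YPartition) (p : ℕ × ℕ) : Prop :=
  1 ≤ p.1 ∧ p.2 = μ.part p.1 + 1 ∧ (p.1 = 1 ∨ p.2 ≤ μ.part (p.1 - 1))

/-- The removable `i`-boxes of `μ`. -/
def RemovableRes (ℓ i : ℕ) (μ : YPartition) : Set (ℕ × ℕ) :=
  {p | Removable μ p ∧ res ℓ p = i}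

/-- The addable `i`-boxes of `μ`. -/
def AddableRes (ℓ i : ℕ) (μ : YPartition) : Set (ℕ × ℕ) :=
  {p | Addable μ p ∧ res ℓ p = i}

/-- Ladder reading order (reflexive): ladders left to right, top to bottom within a ladder.
`LadderLE ℓ p q` means `p` is read before (or equal to) `q`. -/
def LadderLE (ℓ : ℕ) (p q : ℕ × ℕ) : Prop :=
  ladderIdx ℓ p < ladderIdx ℓ q ∨ (ladderIdx ℓ p = ladderIdx ℓ q ∧ p.1 ≤ q.1)

/-- Strict ladder reading order. -/
def LadderLT (ℓ : ℕ) (p q : ℕ × ℕ) : Prop :=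
  ladderIdx ℓ p < ladderIdx ℓ q ∨ (ladderIdx ℓ p = ladderIdx ℓ q ∧ p.1 < q.1)

/-- Classical reading order (reflexive): rows from bottom to top.
`RowLE p q` means `p` is read before (or equal to) `q`. -/
def RowLE (p q : ℕ × ℕ) : Prop := q.1 ≤ p.1

/-- Given a reading order `le`, a set `Rem` of `-` marks and `Add` of `+` marks, a `-` at `p`
survives the cancellation of adjacent `-+` pairs iff every interval of the reading word
starting at `p` contains strictly more `-`'s than `+`'s. -/
def NormalIn (le : ℕ × ℕ → ℕ × ℕ → Prop) (Rem Add : Set (ℕ × ℕ)) (p : ℕ × ℕ) : Prop :=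
  p ∈ Rem ∧ ∀ q ∈ Rem ∪ Add, le p q →
    (Add ∩ {s | le p s ∧ le s q}).ncard < (Rem ∩ {s | le p s ∧ le s q}).ncard

/-- A `+` at `q` survives the cancellation of adjacent `-+` pairs iff every interval of the
reading word ending at `q` contains strictly more `+`'s than `-`'s. -/
def ConormalIn (le : ℕ × ℕ → ℕ × ℕ → Prop) (Rem Add : Set (ℕ × ℕ)) (q : ℕ × ℕ) : Prop :=
  q ∈ Add ∧ ∀ p ∈ Rem ∪ Add, le p q →
    (Rem ∩ {s | le p s ∧ le s q}).ncard < (Add ∩ {s | le p s ∧ le s q}).ncard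

/-- Ladder normal `i`-box. -/
def LadderNormal (ℓ i : ℕ) (μ : YPartition) (p : ℕ × ℕ) : Prop :=
  NormalIn (LadderLE ℓ) (RemovableRes ℓ i μ) (AddableRes ℓ i μ) p

/-- Ladder conormal `i`-box. -/
def LadderConormal (ℓ i : ℕ) (μ : YPartition) (p : ℕ × ℕ) : Prop :=
  ConormalIn (LadderLE ℓ) (RemovableRes ℓ i μ) (AddableRes ℓ i μ) p

/-- Normal `i`-box (classical signature). -/
def ClassNormal (ℓ i : ℕ) (μ : YPartition) (p : ℕ × ℕ) : Prop :=
  NormalIn RowLE (RemovableRes ℓ i μ) (AddableRes ℓ i μ) p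

/-- Conormal `i`-box (classical signature). -/
def ClassConormal (ℓ i : ℕ) (μ : YPartition) (p : ℕ × ℕ) : Prop :=
  ConormalIn RowLE (RemovableRes ℓ i μ) (AddableRes ℓ i μ) p

/-- `ε̂_i(μ)`: number of ladder normal `i`-boxes. -/
def hatEps (ℓ i : ℕ) (μ : YPartition) : ℕ := {p | LadderNormal ℓ i μ p}.ncard

/-- `φ̂_i(μ)`: number of ladder conormal `i`-boxes. -/
def hatPhi (ℓ i : ℕ) (μ : YPartition) : ℕ := {p | LadderConormal ℓ i μ p}.ncard

/-- `ε_i(μ)`: number of normal `i`-boxes. -/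
def eps (ℓ i : ℕ) (μ : YPartition) : ℕ := {p | ClassNormal ℓ i μ p}.ncard

/-- `φ_i(μ)`: number of conormal `i`-boxes. -/
def phi (ℓ i : ℕ) (μ : YPartition) : ℕ := {p | ClassConormal ℓ i μ p}.ncard

/-- The ladder good `i`-box: the leftmost `-` of the reduced ladder `i`-signature. -/
def LadderGood (ℓ i : ℕ) (μ : YPartition) (p : ℕ × ℕ) : Prop :=
  LadderNormal ℓ i μ p ∧ ∀ q, LadderNormal ℓ i μ q → LadderLE ℓ p q

/-- The ladder cogood `i`-box: the rightmost `+` of the reduced ladder `i`-signature. -/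
def LadderCogood (ℓ i : ℕ) (μ : YPartition) (p : ℕ × ℕ) : Prop :=
  LadderConormal ℓ i μ p ∧ ∀ q, LadderConormal ℓ i μ q → LadderLE ℓ q p

/-- The good `i`-box (classical). -/
def ClassGood (ℓ i : ℕ) (μ : YPartition) (p : ℕ × ℕ) : Prop :=
  ClassNormal ℓ i μ p ∧ ∀ q, ClassNormal ℓ i μ q → RowLE p q

/-- The cogood `i`-box (classical). -/
def ClassCogood (ℓ i : ℕ) (μ : YPartition) (p : ℕ × ℕ) : Prop :=
  ClassConormal ℓ i μ p ∧ ∀ q, ClassConormal ℓ i μ q → RowLE q p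

/-- The ladder crystal operator `f̂_i` as a relation: `mu = f̂_i lam ≠ 0`. -/
def HatF (ℓ i : ℕ) (lam mu : YPartition) : Prop :=
  ∃ p, LadderCogood ℓ i lam p ∧ mu.cells = insert p lam.cells

/-- The ladder crystal operator `ê_i` as a relation: `mu = ê_i lam ≠ 0`. -/
def HatE (ℓ i : ℕ) (lam mu : YPartition) : Prop :=
  ∃ p, LadderGood ℓ i lam p ∧ mu.cells = lam.cells \ {p}

/-- The classical crystal operator `f̃_i` as a relation: `mu = f̃_i lam ≠ 0`. -/
def TildeF (ℓ i : ℕ) (lam mu : YPartition) : Prop :=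
  ∃ p, ClassCogood ℓ i lam p ∧ mu.cells = insert p lam.cells

/-- The classical crystal operator `ẽ_i` as a relation: `mu = ẽ_i lam ≠ 0`. -/
def TildeE (ℓ i : ℕ) (lam mu : YPartition) : Prop :=
  ∃ p, ClassGood ℓ i lam p ∧ mu.cells = lam.cells \ {p}

/-- `n`-fold composition of a relation. -/
def RelIter {α : Type} (r : α → α → Prop) : ℕ → α → α → Prop
  | 0 => fun a b => a = b
  | n + 1 => fun a b => ∃ c, r a c ∧ RelIter r n c b

/-- The empty partition. -/
def emptyP : YPartition where
  part := fun _ => 0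
  zero_at_zero := rfl
  antitone := fun _ _ _ _ => le_rfl
  eventually_zero := ⟨0, fun _ _ => rfl⟩

/-- `μ` is a node of the ladder crystal `B(Λ₀)^L`: it is obtained from the empty
partition by finitely many applications of the operators `f̂_i`, `0 ≤ i < ℓ`. -/
def LadderNode (ℓ : ℕ) (μ : YPartition) : Prop :=
  Relation.ReflTransGen (fun a b => ∃ i : ℕ, i < ℓ ∧ HatF ℓ i a b) emptyP μ

/-- The type I locking condition at `(a,b)`: every unoccupied position on the ladder of
`(a,b)` lying below it has an unoccupied position directly above it. -/
def LadderClear (ℓ : ℕ) (μ : YPartition) (a b : ℕ) : Prop :=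
  ∀ c d : ℕ, 1 ≤ c → 1 ≤ d → SameLadder ℓ (a, b) (c, d) → a < c →
    (c, d) ∉ μ.cells → (c - 1, d) ∉ μ.cells

/-- Locked boxes of `μ`. -/
inductive Locked (ℓ : ℕ) (μ : YPartition) : ℕ × ℕ → Prop where
  | typeI_top : ∀ b : ℕ, (1, b) ∈ μ.cells → LadderClear ℓ μ 1 b → Locked ℓ μ (1, b)
  | typeI_up : ∀ a b : ℕ, (a + 1, b) ∈ μ.cells → Locked ℓ μ (a, b) →
      LadderClear ℓ μ (a + 1) b → Locked ℓ μ (a + 1, b)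
  | typeII : ∀ a b b' : ℕ, (a, b) ∈ μ.cells → b < b' → Locked ℓ μ (a, b') → Locked ℓ μ (a, b)

/-- Number of boxes of `μ` on the `k`-th ladder. -/
def ladderCount (ℓ : ℕ) (μ : YPartition) (k : ℕ) : ℕ :=
  (μ.cells ∩ {p | ladderIdx ℓ p = k}).ncard

/-- `lam` and `mu` lie in the same regularization class: they have the same number of
boxes on every ladder. -/
def SameRegClass (ℓ : ℕ) (lam mu : YPartition) : Prop :=
  ∀ k : ℕ, ladderCount ℓ lam k = ladderCount ℓ mu k

/-- The boxes of `μ` are top-justified on each ladder. -/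
def TopJustified (ℓ : ℕ) (μ : YPartition) : Prop :=
  ∀ p ∈ μ.cells, ∀ q : ℕ × ℕ, 1 ≤ q.1 → 1 ≤ q.2 →
    ladderIdx ℓ q = ladderIdx ℓ p → q.1 < p.1 → q ∈ μ.cells

/-- `mu = R lam`: the regularization of `lam`, obtained by moving every box of `lam` to
the topmost unoccupied positions of its ladder. -/
def IsRegularization (ℓ : ℕ) (lam mu : YPartition) : Prop :=
  SameRegClass ℓ lam mu ∧ TopJustified ℓ mu

/-- Dominance order on partitions. -/
def DomLE (lam mu : YPartition) : Prop :=
  ∀ j : ℕ, ∑ i ∈ Finset.Icc 1 j, lam.part i ≤ ∑ i ∈ Finset.Icc 1 j, mu.part i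

/-- All (positive) positions on the `k`-th ladder. -/
def LadderPositions (ℓ k : ℕ) : Set (ℕ × ℕ) :=
  {p | 1 ≤ p.1 ∧ 1 ≤ p.2 ∧ ladderIdx ℓ p = k}

/-- The set of locked boxes of `μ`. -/
def lockedCells (ℓ : ℕ) (μ : YPartition) : Set (ℕ × ℕ) := {p | Locked ℓ μ p}

/-- The number of unlocked boxes of `μ` on the `k`-th ladder. -/
def unlockedCount (ℓ : ℕ) (μ : YPartition) (k : ℕ) : ℕ :=
  ((μ.cells ∩ LadderPositions ℓ k) \ lockedCells ℓ μ).ncard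

/-- The diagram `S μ`: locked boxes stay put, and on each ladder the unlocked boxes are
moved into the lowest positions of that ladder not occupied by locked boxes. -/
def SCells (ℓ : ℕ) (μ : YPartition) : Set (ℕ × ℕ) :=
  lockedCells ℓ μ ∪
    {p | 1 ≤ p.1 ∧ 1 ≤ p.2 ∧ p ∉ lockedCells ℓ μ ∧
      ((LadderPositions ℓ (ladderIdx ℓ p) ∩ {q | p.1 < q.1}) \ lockedCells ℓ μ).ncard
        < unlockedCount ℓ μ (ladderIdx ℓ p)}

/-- `μ` is `ℓ`-regular: no part occurs `ℓ` or more times. -/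
def IsRegular (ℓ : ℕ) (μ : YPartition) : Prop :=
  ∀ a : ℕ, 1 ≤ a → 0 < μ.part (a + (ℓ - 1)) → μ.part (a + (ℓ - 1)) < μ.part a

/-- Removal of a single horizontal or vertical `ℓ`-rim hook. -/
def RemoveHV (ℓ : ℕ) (lam mu : YPartition) : Prop :=
  ∃ S : Set (ℕ × ℕ), IsRimHook ℓ lam S ∧ (HorizontalHook S ∨ VerticalHook S) ∧
    mu.cells = lam.cells \ S

/-- Condition (1): every removable `ℓ`-rim hook is horizontal or vertical. -/
def Cond1 (ℓ : ℕ) (μ : YPartition) : Prop :=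
  ∀ S : Set (ℕ × ℕ), IsRimHook ℓ μ S → HorizontalHook S ∨ VerticalHook S

/-- Condition (2): no vertical (resp. horizontal) `ℓ`-rim hook `R` of `μ` together with an
adjacent horizontal (resp. vertical) `ℓ`-rim hook `S` of `μ \ R` . -/
def Cond2 (ℓ : ℕ) (μ : YPartition) : Prop :=
  ¬ ∃ (R S : Set (ℕ × ℕ)) (ν : YPartition), IsRimHook ℓ μ R ∧ ν.cells = μ.cells \ R ∧
    IsRimHook ℓ ν S ∧ SetsAdjacent R S ∧
    ((VerticalHook R ∧ HorizontalHook S) ∨ (HorizontalHook R ∧ VerticalHook S))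

/-- A generalized `ℓ`-partition: conditions (1) and (2) hold after removing any sequence of
horizontal and vertical `ℓ`-rim hooks (including the empty sequence). -/
def IsGenLPartition (ℓ : ℕ) (lam : YPartition) : Prop :=
  ∀ mu : YPartition, Relation.ReflTransGen (RemoveHV ℓ) lam mu → Cond1 ℓ mu ∧ Cond2 ℓ mu

/-- The `t`-th row (from the top) of the bottom block of the decomposition
`(μ, r, s, ρ, σ)`: the number of values `v ∈ [1, s+1]` whose column block still reaches
row `t`; column block `v` consists of `σ_v·ℓ + (s+1−v)(ℓ−1)` rows of length `≥ v`. -/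
def bottomPart (ℓ s : ℕ) (σ : YPartition) (t : ℕ) : ℕ :=
  ((Finset.Icc 1 (s + 1)).filter fun v => t ≤ σ.part v * ℓ + (s + 1 - v) * (ℓ - 1)).card

/-- The `i`-th part of the partition corresponding to the data `(μ, r, s, ρ, σ)`. -/
def decompPart (ℓ : ℕ) (mu : YPartition) (r s : ℕ) (ρ σ : YPartition) (i : ℕ) : ℕ :=
  if i = 0 then 0
  else if i ≤ r + 1 then s + mu.part 1 + (r + 1 - i) * (ℓ - 1) + ρ.part i * ℓ
  else if i ≤ r + max mu.length 1 then s + mu.part (i - r)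
  else bottomPart ℓ s σ (i - (r + max mu.length 1))

/-- Admissibility of the decomposition data `(μ, r, s, ρ, σ)`. -/
def GoodData (ℓ : ℕ) (mu : YPartition) (r s : ℕ) (ρ σ : YPartition) : Prop :=
  IsCore ℓ mu ∧ mu.part 1 < mu.part 2 + (ℓ - 1) ∧ mu.colLen 1 < mu.colLen 2 + (ℓ - 1) ∧
  ρ.length ≤ r + 1 ∧ σ.length ≤ s + 1 ∧
  (mu.cells = ∅ → ρ.part (r + 1) = 0 ∨ σ.part (s + 1) = 0)

/-- `lam ≈ (μ, r, s, ρ, σ)`. -/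
def Decomposes (ℓ : ℕ) (lam mu : YPartition) (r s : ℕ) (ρ σ : YPartition) : Prop :=
  ∀ i : ℕ, lam.part i = decompPart ℓ mu r s ρ σ i

/-- Removal of a single `ℓ`-rim hook. -/
def RemoveHook (ℓ : ℕ) (lam mu : YPartition) : Prop :=
  ∃ S : Set (ℕ × ℕ), IsRimHook ℓ lam S ∧ mu.cells = lam.cells \ S

/-- `lam` has `ℓ`-core `nu` and `ℓ`-weight `w`. -/
def HasCoreAndWeight (ℓ : ℕ) (lam nu : YPartition) (w : ℕ) : Prop :=
  IsCore ℓ nu ∧ RelIter (RemoveHook ℓ) w lam nu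

/-- An L-partition. -/
def IsLPartition (ℓ : ℕ) (lam : YPartition) : Prop :=
  ¬ ∃ p : ℕ × ℕ, p ∈ lam.cells ∧ ℓ ∣ lam.hook p.1 p.2 ∧
    (lam.arm p.1 p.2 < (ℓ - 1) * lam.leg p.1 p.2 ∨
     lam.leg p.1 p.2 < (ℓ - 1) * lam.arm p.1 p.2)

end YPartition



noncomputable section
namespace YPartition

/-! ### Structure extensionality -/

theorem part_ext {P Q : YPartition} (h : P.part = Q.part) : P = Q := by
  cases P; cases Q; simp only at h; subst h; rfl

theorem mem_cells_iff {P : YPartition} {a b : ℕ} :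
    (a, b) ∈ P.cells ↔ 1 ≤ a ∧ 1 ≤ b ∧ b ≤ P.part a := Iff.rfl

theorem part_le_iff {P : YPartition} {a b : ℕ} (ha : 1 ≤ a) (hb : 1 ≤ b) :
    b ≤ P.part a ↔ (a, b) ∈ P.cells := by
  simp [mem_cells_iff, ha, hb]

theorem part_eq_zero_of_cells {P : YPartition} (h : P.cells = ∅) (a : ℕ) : P.part a = 0 := by
  rcases Nat.eq_zero_or_pos a with rfl | ha
  · exact P.zero_at_zero
  rcases Nat.eq_zero_or_pos (P.part a) with h0 | h0
  · exact h0
  exfalso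
  have hmem : (a, 1) ∈ P.cells := ⟨ha, le_rfl, h0⟩
  rw [h] at hmem; exact hmem

theorem eq_empty_of_cells {P : YPartition} (h : P.cells = ∅) : P = emptyP := by
  apply part_ext; funext a; exact part_eq_zero_of_cells h a

/-! ### Column lengths -/

theorem colSet_finite (P : YPartition) {b : ℕ} (hb : 1 ≤ b) :
    {a : ℕ | 1 ≤ a ∧ b ≤ P.part a}.Finite := by
  obtain ⟨N, hN⟩ := P.eventually_zero
  apply Set.Finite.subset (Set.finite_Icc 1 N)
  rintro a ⟨ha1, ha2⟩
  refine ⟨ha1, ?_⟩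
  by_contra hc
  have := hN a (by omega)
  omega

theorem colLen_eq_ncard (P : YPartition) (b : ℕ) :
    P.colLen b = {a : ℕ | 1 ≤ a ∧ b ≤ P.part a}.ncard := by
  rw [colLen, Nat.card_coe_set_eq]

theorem le_colLen_iff {P : YPartition} {a b : ℕ} (hb : 1 ≤ b) (ha : 1 ≤ a) :
    a ≤ P.colLen b ↔ b ≤ P.part a := by
  have hfin := P.colSet_finite hb
  rw [colLen_eq_ncard]
  constructor
  · intro h
    by_contra hc
    have hsub : {c : ℕ | 1 ≤ c ∧ b ≤ P.part c} ⊆ Set.Icc 1 (a - 1) := by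
      rintro c ⟨hc1, hc2⟩
      refine ⟨hc1, ?_⟩
      by_contra hcc
      have : P.part c ≤ P.part a := P.antitone a c ha (by omega)
      omega
    have hle := Set.ncard_le_ncard hsub (Set.finite_Icc _ _)
    have : (Set.Icc 1 (a-1)).ncard = a - 1 := by
      rw [← Finset.coe_Icc, Set.ncard_coe_finset, Nat.card_Icc]
      omega
    omega
  · intro h
    have hsub : Set.Icc 1 a ⊆ {c : ℕ | 1 ≤ c ∧ b ≤ P.part c} := by
      rintro c ⟨hc1, hc2⟩
      exact ⟨hc1, le_trans h (P.antitone c a hc1 hc2)⟩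
    have hle := Set.ncard_le_ncard hsub hfin
    have : (Set.Icc 1 a).ncard = a := by
      rw [← Finset.coe_Icc, Set.ncard_coe_finset, Nat.card_Icc]
      omega
    omega

theorem colLen_lt_iff {P : YPartition} {a b : ℕ} (hb : 1 ≤ b) (ha : 1 ≤ a) :
    P.colLen b < a ↔ P.part a < b := by
  have := le_colLen_iff (P := P) hb ha
  omega

/-- Main computation rule for column lengths. -/
theorem colLen_eq_of {P : YPartition} {b k : ℕ} (hb : 1 ≤ b)
    (h1 : k = 0 ∨ b ≤ P.part k) (h2 : P.part (k + 1) < b) : P.colLen b = k := by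
  have hub : P.colLen b ≤ k := by
    by_contra hc
    have : k + 1 ≤ P.colLen b := by omega
    rw [le_colLen_iff hb (by omega)] at this
    omega
  rcases h1 with rfl | h1
  · omega
  rcases Nat.eq_zero_or_pos k with rfl | hk
  · omega
  have : k ≤ P.colLen b := (le_colLen_iff hb hk).mpr h1
  omega

theorem colLen_ge_of_mem {P : YPartition} {a b : ℕ} (h : (a, b) ∈ P.cells) :
    a ≤ P.colLen b := by
  obtain ⟨h1, h2, h3⟩ := h
  exact (le_colLen_iff h2 h1).mpr h3

/-! ### Finiteness of cells and marks -/

theorem cells_finite (P : YPartition) : P.cells.Finite := by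
  obtain ⟨N, hN⟩ := P.eventually_zero
  apply Set.Finite.subset ((Set.finite_Icc 1 N).prod (Set.finite_Icc 1 (P.part 1)))
  rintro ⟨a, b⟩ ⟨h1, h2, h3⟩
  dsimp only at h1 h2 h3
  constructor
  · refine ⟨h1, ?_⟩
    by_contra hc
    have := hN a (by omega)
    omega
  · exact ⟨h2, le_trans h3 (P.antitone 1 a le_rfl h1)⟩

theorem mem_removableRes {ℓ i : ℕ} {P : YPartition} {a b : ℕ} :
    (a, b) ∈ RemovableRes ℓ i P ↔
      (1 ≤ a ∧ b = P.part a ∧ P.part (a + 1) < b ∧ res ℓ (a, b) = i) := by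
  constructor
  · rintro ⟨⟨h1, h2, h3⟩, h4⟩; exact ⟨h1, h2, h3, h4⟩
  · rintro ⟨h1, h2, h3, h4⟩; exact ⟨⟨h1, h2, h3⟩, h4⟩

theorem mem_addableRes {ℓ i : ℕ} {P : YPartition} {a b : ℕ} :
    (a, b) ∈ AddableRes ℓ i P ↔
      (1 ≤ a ∧ b = P.part a + 1 ∧ (a = 1 ∨ b ≤ P.part (a - 1)) ∧ res ℓ (a, b) = i) := by
  constructor
  · rintro ⟨⟨h1, h2, h3⟩, h4⟩; exact ⟨h1, h2, h3, h4⟩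
  · rintro ⟨h1, h2, h3, h4⟩; exact ⟨⟨h1, h2, h3⟩, h4⟩

theorem removable_pos {ℓ i : ℕ} {P : YPartition} {p : ℕ × ℕ}
    (h : p ∈ RemovableRes ℓ i P) : 1 ≤ p.1 ∧ 1 ≤ p.2 := by
  obtain ⟨⟨h1, h2, h3⟩, _⟩ := h
  exact ⟨h1, by omega⟩

theorem addable_pos {ℓ i : ℕ} {P : YPartition} {p : ℕ × ℕ}
    (h : p ∈ AddableRes ℓ i P) : 1 ≤ p.1 ∧ 1 ≤ p.2 := by
  obtain ⟨⟨h1, h2, h3⟩, _⟩ := h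
  exact ⟨h1, by omega⟩

theorem removableRes_finite (ℓ i : ℕ) (P : YPartition) : (RemovableRes ℓ i P).Finite := by
  obtain ⟨N, hN⟩ := P.eventually_zero
  apply Set.Finite.subset ((Set.finite_Icc 1 (N + 1)).prod (Set.finite_Icc 1 (P.part 1 + 1)))
  rintro ⟨a, b⟩ h
  rw [mem_removableRes] at h
  obtain ⟨h1, h2, h3, _⟩ := h
  constructor
  · refine ⟨h1, ?_⟩
    by_contra hc
    have := hN a (by omega)
    omega
  · have := P.antitone 1 a le_rfl h1
    exact ⟨by omega, by omega⟩

theorem addableRes_finite (ℓ i : ℕ) (P : YPartition) : (AddableRes ℓ i P).Finite := by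
  obtain ⟨N, hN⟩ := P.eventually_zero
  apply Set.Finite.subset ((Set.finite_Icc 1 (N + 1)).prod (Set.finite_Icc 1 (P.part 1 + 1)))
  rintro ⟨a, b⟩ h
  rw [mem_addableRes] at h
  obtain ⟨h1, h2, h3, _⟩ := h
  constructor
  · refine ⟨h1, ?_⟩
    by_contra hc
    rcases h3 with h3 | h3
    · omega
    · have := hN (a - 1) (by omega)
      omega
  · have := P.antitone 1 a le_rfl h1
    exact ⟨by omega, by omega⟩

theorem rem_add_disjoint (ℓ i : ℕ) (P : YPartition) :
    Disjoint (RemovableRes ℓ i P) (AddableRes ℓ i P) := by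
  rw [Set.disjoint_left]
  rintro ⟨a, b⟩ h1 h2
  rw [mem_removableRes] at h1
  rw [mem_addableRes] at h2
  omega

/-! ### Residues -/

theorem res_lt {ℓ : ℕ} (hl : 1 ≤ ℓ) (p : ℕ × ℕ) : res ℓ p < ℓ := by
  unfold res
  have h0 : (ℓ : ℤ) ≠ 0 := by omega
  have h1 := Int.emod_nonneg ((p.2 : ℤ) - p.1) h0
  have h2 := Int.emod_lt_of_pos ((p.2 : ℤ) - p.1) (b := (ℓ:ℤ)) (by omega)
  omega

theorem res_eq_iff {ℓ : ℕ} (hl : 1 ≤ ℓ) (p q : ℕ × ℕ) :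
    res ℓ p = res ℓ q ↔ (ℓ : ℤ) ∣ ((q.2 : ℤ) - q.1) - ((p.2 : ℤ) - p.1) := by
  unfold res
  have h0 : (ℓ : ℤ) ≠ 0 := by omega
  have e1 := Int.emod_nonneg ((p.2 : ℤ) - p.1) h0
  have e2 := Int.emod_nonneg ((q.2 : ℤ) - q.1) h0
  constructor
  · intro h
    have hmod : ((p.2 : ℤ) - p.1) % ℓ = ((q.2 : ℤ) - q.1) % ℓ := by omega
    exact (Int.modEq_iff_dvd.mp hmod)
  · intro h
    have hmod : ((p.2 : ℤ) - p.1) % ℓ = ((q.2 : ℤ) - q.1) % ℓ := Int.modEq_iff_dvd.mpr h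
    omega

theorem not_dvd_pm_one {ℓ : ℕ} (hl : 2 ≤ ℓ) {z : ℤ} (hz : z = 1 ∨ z = -1) :
    ¬ (ℓ : ℤ) ∣ z := by
  intro h
  have h1 : (ℓ : ℤ) ∣ 1 := by
    rcases hz with rfl | rfl
    · exact h
    · exact (dvd_neg).mp h
  have := Int.le_of_dvd one_pos h1
  omega

/-! ### Ladder order -/

theorem ladderLE_refl (ℓ : ℕ) (p : ℕ × ℕ) : LadderLE ℓ p p := Or.inr ⟨rfl, le_rfl⟩

theorem ladderLE_total (ℓ : ℕ) (p q : ℕ × ℕ) : LadderLE ℓ p q ∨ LadderLE ℓ q p := by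
  unfold LadderLE; omega

theorem ladderLE_trans {ℓ : ℕ} {p q r : ℕ × ℕ} (h1 : LadderLE ℓ p q) (h2 : LadderLE ℓ q r) :
    LadderLE ℓ p r := by
  unfold LadderLE at *; omega

theorem ladderLT_iff_not_le {ℓ : ℕ} {p q : ℕ × ℕ} :
    LadderLT ℓ p q ↔ ¬ LadderLE ℓ q p := by
  unfold LadderLT LadderLE; omega

theorem ladderLT_le {ℓ : ℕ} {p q : ℕ × ℕ} (h : LadderLT ℓ p q) : LadderLE ℓ p q := by
  unfold LadderLT at h; unfold LadderLE; omega

theorem ladderLT_of_lt_of_le {ℓ : ℕ} {p q r : ℕ × ℕ} (h1 : LadderLT ℓ p q)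
    (h2 : LadderLE ℓ q r) : LadderLT ℓ p r := by
  unfold LadderLT at *; unfold LadderLE at h2; omega

theorem ladderLT_of_le_of_lt {ℓ : ℕ} {p q r : ℕ × ℕ} (h1 : LadderLE ℓ p q)
    (h2 : LadderLT ℓ q r) : LadderLT ℓ p r := by
  unfold LadderLT at *; unfold LadderLE at h1; omega

theorem idx_le_of_le {ℓ : ℕ} {p q : ℕ × ℕ} (h : LadderLE ℓ p q) :
    ladderIdx ℓ p ≤ ladderIdx ℓ q := by
  unfold LadderLE at h; omega

theorem ladderLE_antisymm {ℓ : ℕ} (hl : 2 ≤ ℓ) {p q : ℕ × ℕ} (hp : 1 ≤ p.2) (hq : 1 ≤ q.2)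
    (h1 : LadderLE ℓ p q) (h2 : LadderLE ℓ q p) : p = q := by
  unfold LadderLE at h1 h2
  have hrow : p.1 = q.1 := by omega
  have hidx : ladderIdx ℓ p = ladderIdx ℓ q := by omega
  unfold ladderIdx at hidx
  have : (ℓ - 1) * (p.2 - 1) = (ℓ - 1) * (q.2 - 1) := by omega
  have hcol : p.2 - 1 = q.2 - 1 := Nat.eq_of_mul_eq_mul_left (by omega) this
  have : p.2 = q.2 := by omega
  exact Prod.ext hrow this

/-- Parametrization of two positions on the same ladder. -/
theorem ladder_param {ℓ : ℕ} (hl : 2 ≤ ℓ) {p q : ℕ × ℕ} (hp : 1 ≤ p.2) (hq : 1 ≤ q.2)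
    (hidx : ladderIdx ℓ p = ladderIdx ℓ q) (hrow : p.1 < q.1) :
    ∃ j, 1 ≤ j ∧ j + 1 ≤ p.2 ∧ q.1 = p.1 + (ℓ - 1) * j ∧ q.2 + j = p.2 := by
  unfold ladderIdx at hidx
  have hgt : q.2 < p.2 := by
    by_contra hc
    have : (ℓ - 1) * (p.2 - 1) ≤ (ℓ - 1) * (q.2 - 1) :=
      Nat.mul_le_mul_left _ (by omega)
    omega
  refine ⟨p.2 - q.2, by omega, by omega, ?_, by omega⟩
  have h2 : p.2 - 1 = (q.2 - 1) + (p.2 - q.2) := by omega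
  rw [h2, Nat.mul_add] at hidx
  omega

/-- Ladder index of a downward ladder shift. -/
theorem idx_shift {ℓ x y j : ℕ} (hj : j + 1 ≤ y) :
    ladderIdx ℓ (x + (ℓ - 1) * j, y - j) = ladderIdx ℓ (x, y) := by
  unfold ladderIdx
  dsimp only
  have h2 : y - 1 = (y - j - 1) + j := by omega
  rw [h2, Nat.mul_add]
  omega

/-- Positions with equal residue have ladder indices congruent mod ℓ. -/
theorem idx_dvd_of_res_eq {ℓ : ℕ} (hl : 2 ≤ ℓ) {p q : ℕ × ℕ} (hp : 1 ≤ p.2) (hq : 1 ≤ q.2)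
    (h : res ℓ p = res ℓ q) :
    (ℓ : ℤ) ∣ (ladderIdx ℓ q : ℤ) - (ladderIdx ℓ p : ℤ) := by
  rw [res_eq_iff (by omega)] at h
  have e1 : (ladderIdx ℓ p : ℤ) = p.1 + ((ℓ : ℤ) - 1) * ((p.2 : ℤ) - 1) := by
    unfold ladderIdx
    push_cast [Nat.cast_sub (by omega : 1 ≤ ℓ), Nat.cast_sub hp]
    ring
  have e2 : (ladderIdx ℓ q : ℤ) = q.1 + ((ℓ : ℤ) - 1) * ((q.2 : ℤ) - 1) := by
    unfold ladderIdx
    push_cast [Nat.cast_sub (by omega : 1 ≤ ℓ), Nat.cast_sub hq]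
    ring
  have key : (ladderIdx ℓ q : ℤ) - (ladderIdx ℓ p : ℤ) =
      (ℓ : ℤ) * ((q.2 : ℤ) - p.2) - (((q.2 : ℤ) - q.1) - ((p.2 : ℤ) - p.1)) := by
    rw [e1, e2]; ring
  rw [key]
  exact dvd_sub (Dvd.intro _ rfl) h

/-- If two same-residue positions are within one residue-ladder spacing,
their indices agree or differ by exactly ℓ. -/
theorem idx_cases_of_res_eq {ℓ : ℕ} (hl : 2 ≤ ℓ) {p q : ℕ × ℕ} (hp : 1 ≤ p.2) (hq : 1 ≤ q.2)
    (h : res ℓ p = res ℓ q) (h1 : ladderIdx ℓ p ≤ ladderIdx ℓ q)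
    (h2 : ladderIdx ℓ q ≤ ladderIdx ℓ p + ℓ) :
    ladderIdx ℓ q = ladderIdx ℓ p ∨ ladderIdx ℓ q = ladderIdx ℓ p + ℓ := by
  obtain ⟨k, hk⟩ := idx_dvd_of_res_eq hl hp hq h
  have hk0 : 0 ≤ k := by
    by_contra hc
    have : k ≤ -1 := by omega
    have : (ℓ : ℤ) * k ≤ (ℓ : ℤ) * (-1) := by
      apply mul_le_mul_of_nonneg_left this (by positivity)
    omega
  have hk1 : k ≤ 1 := by
    by_contra hc
    have : (2 : ℤ) ≤ k := by omega
    have : (ℓ : ℤ) * 2 ≤ (ℓ : ℤ) * k := by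
      apply mul_le_mul_of_nonneg_left this (by positivity)
    omega
  interval_cases k <;> omega

end YPartition



noncomputable section
namespace YPartition

/-! ### Generic box-update lemmas -/

section AddUpdate

variable {ℓ : ℕ} {P Q : YPartition} {x y : ℕ}

theorem cells_add (hQ : ∀ a, Q.part a = if a = x then y else P.part a)
    (hx : 1 ≤ x) (hpx : P.part x + 1 = y) :
    Q.cells = insert (x, y) P.cells := by
  ext ⟨a, b⟩
  simp only [mem_cells_iff, Set.mem_insert_iff, Prod.mk.injEq, hQ a]
  by_cases hax : a = x
  · subst hax; rw [if_pos rfl]; omega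
  · rw [if_neg hax]; omega

theorem colLen_add_self (hQ : ∀ a, Q.part a = if a = x then y else P.part a)
    (hx : 1 ≤ x) (hpx : P.part x + 1 = y) :
    Q.colLen y = x := by
  apply colLen_eq_of (by omega)
  · right; rw [hQ x, if_pos rfl]
  · rw [hQ (x + 1), if_neg (by omega)]
    have := P.antitone x (x + 1) hx (by omega)
    omega

theorem colLen_add_ne (hQ : ∀ a, Q.part a = if a = x then y else P.part a)
    (hx : 1 ≤ x) (hpx : P.part x + 1 = y) {b : ℕ} (hb : 1 ≤ b) (hby : b ≠ y) :
    Q.colLen b = P.colLen b := by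
  rcases lt_or_gt_of_ne hby with hlt | hgt
  · have hxle : x ≤ P.colLen b := (le_colLen_iff hb hx).mpr (by omega)
    apply colLen_eq_of hb
    · right
      rw [hQ]
      by_cases hk : P.colLen b = x
      · rw [if_pos hk]; omega
      · rw [if_neg hk]
        exact (le_colLen_iff hb (by omega)).mp le_rfl
    · rw [hQ, if_neg (by omega)]
      have h2 := le_colLen_iff (P := P) hb (a := P.colLen b + 1) (by omega)
      omega
  · have hkx : P.colLen b < x := by
      by_contra hc
      have hbx : b ≤ P.part x := (le_colLen_iff hb hx).mp (by omega)
      omega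
    apply colLen_eq_of hb
    · rcases Nat.eq_zero_or_pos (P.colLen b) with h0 | h0
      · left; exact h0
      · right; rw [hQ, if_neg (by omega)]
        exact (le_colLen_iff hb h0).mp le_rfl
    · rw [hQ]
      by_cases hk : P.colLen b + 1 = x
      · rw [if_pos hk]; omega
      · rw [if_neg hk]
        have h2 := le_colLen_iff (P := P) hb (a := P.colLen b + 1) (by omega)
        omega

end AddUpdate

section RemUpdate

variable {ℓ : ℕ} {P Q : YPartition} {x y : ℕ}

theorem cells_rem (hQ : ∀ a, Q.part a = if a = x then y - 1 else P.part a)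
    (hx : 1 ≤ x) (hpx : P.part x = y) (hnext : P.part (x + 1) < y) :
    Q.cells = P.cells \ {(x, y)} := by
  ext ⟨a, b⟩
  simp only [mem_cells_iff, Set.mem_diff, Set.mem_singleton_iff, Prod.mk.injEq, hQ a]
  by_cases hax : a = x
  · subst hax; rw [if_pos rfl]; omega
  · rw [if_neg hax]; omega

theorem colLen_rem_self (hQ : ∀ a, Q.part a = if a = x then y - 1 else P.part a)
    (hx : 1 ≤ x) (hpx : P.part x = y) (hnext : P.part (x + 1) < y) :
    Q.colLen y = x - 1 := by
  apply colLen_eq_of (by omega)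
  · rcases Nat.eq_zero_or_pos (x - 1) with h0 | h0
    · left; exact h0
    · right
      rw [hQ, if_neg (by omega)]
      have := P.antitone (x - 1) x h0 (by omega)
      omega
  · rw [hQ, show x - 1 + 1 = x by omega, if_pos rfl]
    omega

theorem colLen_rem_ne (hQ : ∀ a, Q.part a = if a = x then y - 1 else P.part a)
    (hx : 1 ≤ x) (hpx : P.part x = y) (hnext : P.part (x + 1) < y)
    {b : ℕ} (hb : 1 ≤ b) (hby : b ≠ y) :
    Q.colLen b = P.colLen b := by
  rcases lt_or_gt_of_ne hby with hlt | hgt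
  · have hxle : x ≤ P.colLen b := (le_colLen_iff hb hx).mpr (by omega)
    apply colLen_eq_of hb
    · right
      rw [hQ]
      by_cases hk : P.colLen b = x
      · rw [if_pos hk]; omega
      · rw [if_neg hk]
        exact (le_colLen_iff hb (by omega)).mp le_rfl
    · rw [hQ, if_neg (by omega)]
      have h2 := le_colLen_iff (P := P) hb (a := P.colLen b + 1) (by omega)
      omega
  · have hkx : P.colLen b < x := by
      by_contra hc
      have hbx : b ≤ P.part x := (le_colLen_iff hb hx).mp (by omega)
      omega
    apply colLen_eq_of hb
    · rcases Nat.eq_zero_or_pos (P.colLen b) with h0 | h0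
      · left; exact h0
      · right; rw [hQ, if_neg (by omega)]
        exact (le_colLen_iff hb h0).mp le_rfl
    · rw [hQ]
      by_cases hk : P.colLen b + 1 = x
      · rw [if_pos hk]; omega
      · rw [if_neg hk]
        have h2 := le_colLen_iff (P := P) hb (a := P.colLen b + 1) (by omega)
        omega

end RemUpdate

/-! ### Residue changes of adjacent positions -/

theorem res_right_ne {ℓ : ℕ} (hl : 2 ≤ ℓ) (a b : ℕ) : res ℓ (a, b + 1) ≠ res ℓ (a, b) := by
  intro h
  rw [res_eq_iff (by omega)] at h
  apply not_dvd_pm_one hl (z := ((b : ℤ) - a) - (((b : ℤ) + 1) - a)) (Or.inr (by ring)) 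
  exact_mod_cast h

theorem res_down_ne {ℓ : ℕ} (hl : 2 ≤ ℓ) (a b : ℕ) : res ℓ (a + 1, b) ≠ res ℓ (a, b) := by
  intro h
  rw [res_eq_iff (by omega)] at h
  apply not_dvd_pm_one hl (z := ((b : ℤ) - a) - ((b : ℤ) - ((a : ℤ) + 1))) (Or.inl (by ring))
  exact_mod_cast h

/-! ### Mark sets after removal of a removable box -/

section Marks

variable {ℓ : ℕ} {P Q : YPartition} {x y : ℕ}

theorem rem_marks_rem (hl : 2 ≤ ℓ)
    (hQ : ∀ a, Q.part a = if a = x then y - 1 else P.part a)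
    (hx : 1 ≤ x) (hpx : P.part x = y) (hnext : P.part (x + 1) < y) :
    RemovableRes ℓ (res ℓ (x, y)) Q = RemovableRes ℓ (res ℓ (x, y)) P \ {(x, y)} := by
  have hy : 1 ≤ y := by omega
  have hne1 : res ℓ (x, y - 1) ≠ res ℓ (x, y) := by
    have := res_right_ne hl x (y - 1)
    rw [show y - 1 + 1 = y by omega] at this
    exact fun hh => this hh.symm
  have hne2 : res ℓ (x - 1, y) ≠ res ℓ (x, y) := fun hh => by
    have h2 := res_down_ne hl (x - 1) y
    rw [show x - 1 + 1 = x by omega] at h2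
    exact h2 hh.symm
  ext ⟨a, b⟩
  simp only [mem_removableRes, Set.mem_diff, Set.mem_singleton_iff, Prod.mk.injEq, hQ a,
    hQ (a + 1)]
  by_cases h1 : a = x
  · subst h1
    rw [if_pos rfl, if_neg (by omega)]
    constructor
    · rintro ⟨hha, hhb, hhc, hhd⟩
      exfalso
      have hb' : b = y - 1 := by omega
      subst hb'
      exact hne1 hhd
    · rintro ⟨⟨hha, hhb, hhc, hhd⟩, h5⟩
      exfalso
      exact h5 ⟨rfl, by omega⟩
  · rw [if_neg h1]
    by_cases h2 : a + 1 = x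
    · rw [if_pos h2]
      constructor
      · rintro ⟨hha, hhb, hhc, hhd⟩
        have hbney : b ≠ y := by
          intro hby
          subst hby
          rw [show a = x - 1 by omega] at hhd
          exact hne2 hhd
        refine ⟨⟨hha, hhb, ?_, hhd⟩, ?_⟩
        · rw [h2]; omega
        · rintro ⟨rfl, -⟩; exact h1 rfl
      · rintro ⟨⟨hha, hhb, hhc, hhd⟩, -⟩
        rw [h2] at hhc
        exact ⟨hha, hhb, by omega, hhd⟩
    · rw [if_neg h2]
      constructor
      · rintro ⟨hha, hhb, hhc, hhd⟩
        exact ⟨⟨hha, hhb, hhc, hhd⟩, by rintro ⟨rfl, -⟩; exact h1 rfl⟩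
      · rintro ⟨⟨hha, hhb, hhc, hhd⟩, -⟩
        exact ⟨hha, hhb, hhc, hhd⟩

theorem rem_marks_add (hl : 2 ≤ ℓ)
    (hQ : ∀ a, Q.part a = if a = x then y - 1 else P.part a)
    (hx : 1 ≤ x) (hpx : P.part x = y) (hnext : P.part (x + 1) < y) :
    AddableRes ℓ (res ℓ (x, y)) Q = AddableRes ℓ (res ℓ (x, y)) P ∪ {(x, y)} := by
  have hy : 1 ≤ y := by omega
  have hne3 : res ℓ (x, y + 1) ≠ res ℓ (x, y) := res_right_ne hl x y
  have hne4 : res ℓ (x + 1, y) ≠ res ℓ (x, y) := res_down_ne hl x y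
  ext ⟨a, b⟩
  simp only [mem_addableRes, Set.mem_union, Set.mem_singleton_iff, Prod.mk.injEq, hQ a,
    hQ (a - 1)]
  by_cases h1 : a = x
  · subst h1
    rw [if_pos rfl, if_neg (by omega)]
    constructor
    · rintro ⟨hha, hhb, hhc, hhd⟩
      right
      exact ⟨rfl, by omega⟩
    · rintro (⟨hha, hhb, hhc, hhd⟩ | ⟨-, rfl⟩)
      · exfalso
        have hb' : b = y + 1 := by omega
        subst hb'
        exact hne3 hhd
      · refine ⟨hx, by omega, ?_, rfl⟩
        rcases Nat.eq_zero_or_pos (a - 1) with h0 | h0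
        · left; omega
        · right
          have := P.antitone (a - 1) a h0 (by omega)
          omega
  · rw [if_neg h1]
    by_cases h2 : a = x + 1
    · subst h2
      rw [if_pos (by omega)]
      constructor
      · rintro ⟨hha, hhb, hhc, hhd⟩
        have hbney : b ≠ y := by
          intro hby
          subst hby
          exact hne4 hhd
        left
        refine ⟨hha, hhb, ?_, hhd⟩
        rw [show x + 1 - 1 = x by omega]
        omega
      · rintro (⟨hha, hhb, hhc, hhd⟩ | ⟨h5, -⟩)
        · have hbney : b ≠ y := by
            intro hby
            subst hby
            exact hne4 hhd
          refine ⟨hha, hhb, ?_, hhd⟩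
          rw [show x + 1 - 1 = x by omega] at hhc
          omega
        · exact absurd h5 (by omega)
    · rw [if_neg (by omega)]
      constructor
      · rintro ⟨hha, hhb, hhc, hhd⟩
        exact Or.inl ⟨hha, hhb, hhc, hhd⟩
      · rintro (⟨hha, hhb, hhc, hhd⟩ | ⟨h5, -⟩)
        · exact ⟨hha, hhb, hhc, hhd⟩
        · exact absurd h5 h1

end Marks

end YPartition



noncomputable section
namespace YPartition

/-- Closed reading-order interval `[p, q]`. -/
def Iv (ℓ : ℕ) (p q : ℕ × ℕ) : Set (ℕ × ℕ) := {s | LadderLE ℓ p s ∧ LadderLE ℓ s q}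

/-- Half-open interval `(p, q]`. -/
def IvL (ℓ : ℕ) (p q : ℕ × ℕ) : Set (ℕ × ℕ) := {s | LadderLT ℓ p s ∧ LadderLE ℓ s q}

/-- Half-open interval `[p, q)`. -/
def IvR (ℓ : ℕ) (p q : ℕ × ℕ) : Set (ℕ × ℕ) := {s | LadderLE ℓ p s ∧ LadderLT ℓ s q}

theorem normalIn_iff {ℓ : ℕ} {R A : Set (ℕ × ℕ)} {p : ℕ × ℕ} :
    NormalIn (LadderLE ℓ) R A p ↔
      p ∈ R ∧ ∀ q ∈ R ∪ A, LadderLE ℓ p q →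
        (A ∩ Iv ℓ p q).ncard < (R ∩ Iv ℓ p q).ncard := Iff.rfl

theorem conormalIn_iff {ℓ : ℕ} {R A : Set (ℕ × ℕ)} {q : ℕ × ℕ} :
    ConormalIn (LadderLE ℓ) R A q ↔
      q ∈ A ∧ ∀ p ∈ R ∪ A, LadderLE ℓ p q →
        (R ∩ Iv ℓ p q).ncard < (A ∩ Iv ℓ p q).ncard := Iff.rfl

section Counting

variable {ℓ : ℕ} {S M : Set (ℕ × ℕ)} {p q r : ℕ × ℕ}

theorem Iv_split (hS : S.Finite) (h1 : LadderLE ℓ p q) (h2 : LadderLE ℓ q r) :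
    (S ∩ Iv ℓ p r).ncard = (S ∩ Iv ℓ p q).ncard + (S ∩ IvL ℓ q r).ncard := by
  have hU : S ∩ Iv ℓ p r = (S ∩ Iv ℓ p q) ∪ (S ∩ IvL ℓ q r) := by
    ext s
    simp only [Iv, IvL, Set.mem_inter_iff, Set.mem_union, Set.mem_setOf_eq]
    constructor
    · rintro ⟨hs, hps, hsr⟩
      by_cases hx : LadderLE ℓ s q
      · exact Or.inl ⟨hs, hps, hx⟩
      · exact Or.inr ⟨hs, ladderLT_iff_not_le.mpr hx, hsr⟩
    · rintro (⟨hs, hps, hsq⟩ | ⟨hs, hqs, hsr⟩)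
      · exact ⟨hs, hps, ladderLE_trans hsq h2⟩
      · exact ⟨hs, ladderLE_trans h1 (ladderLT_le hqs), hsr⟩
  rw [hU]
  apply Set.ncard_union_eq
  · rw [Set.disjoint_left]
    rintro s ⟨-, -, hsq⟩ ⟨-, hqs, -⟩
    exact (ladderLT_iff_not_le.mp hqs) hsq
  · exact hS.subset Set.inter_subset_left
  · exact hS.subset Set.inter_subset_left

theorem Iv_split' (hS : S.Finite) (h1 : LadderLE ℓ p q) (h2 : LadderLE ℓ q r) :
    (S ∩ Iv ℓ p r).ncard = (S ∩ IvR ℓ p q).ncard + (S ∩ Iv ℓ q r).ncard := by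
  have hU : S ∩ Iv ℓ p r = (S ∩ IvR ℓ p q) ∪ (S ∩ Iv ℓ q r) := by
    ext s
    simp only [Iv, IvR, Set.mem_inter_iff, Set.mem_union, Set.mem_setOf_eq]
    constructor
    · rintro ⟨hs, hps, hsr⟩
      by_cases hx : LadderLE ℓ q s
      · exact Or.inr ⟨hs, hx, hsr⟩
      · exact Or.inl ⟨hs, hps, ladderLT_iff_not_le.mpr hx⟩
    · rintro (⟨hs, hps, hsq⟩ | ⟨hs, hqs, hsr⟩)
      · exact ⟨hs, hps, ladderLE_trans (ladderLT_le hsq) h2⟩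
      · exact ⟨hs, ladderLE_trans h1 hqs, hsr⟩
  rw [hU]
  apply Set.ncard_union_eq
  · rw [Set.disjoint_left]
    rintro s ⟨-, -, hsq⟩ ⟨-, hqs, -⟩
    exact (ladderLT_iff_not_le.mp hsq) hqs
  · exact hS.subset Set.inter_subset_left
  · exact hS.subset Set.inter_subset_left

theorem Iv_self_of_mem (hl : 2 ≤ ℓ) (hS : ∀ s ∈ S, 1 ≤ s.2) (hp2 : 1 ≤ p.2) (hp : p ∈ S) :
    (S ∩ Iv ℓ p p).ncard = 1 := by
  have hset : S ∩ Iv ℓ p p = {p} := by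
    ext s
    simp only [Iv, Set.mem_inter_iff, Set.mem_setOf_eq, Set.mem_singleton_iff]
    constructor
    · rintro ⟨hs, h1, h2⟩
      exact ladderLE_antisymm hl (hS s hs) hp2 h2 h1
    · rintro rfl
      exact ⟨hp, ladderLE_refl _ _, ladderLE_refl _ _⟩
  rw [hset, Set.ncard_singleton]

theorem Iv_self_of_not_mem (hl : 2 ≤ ℓ) (hS : ∀ s ∈ S, 1 ≤ s.2) (hp2 : 1 ≤ p.2) (hp : p ∉ S) :
    (S ∩ Iv ℓ p p).ncard = 0 := by
  have hset : S ∩ Iv ℓ p p = ∅ := by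
    ext s
    simp only [Iv, Set.mem_inter_iff, Set.mem_setOf_eq, Set.mem_empty_iff_false, iff_false,
      not_and]
    intro hs h1 h2
    exact hp ((ladderLE_antisymm hl (hS s hs) hp2 h2 h1) ▸ hs)
  rw [hset, Set.ncard_empty]

theorem cnt_pos_of_mem (hS : S.Finite) {T : Set (ℕ × ℕ)} (h : q ∈ S ∩ T) :
    1 ≤ (S ∩ T).ncard := by
  have hfin : (S ∩ T).Finite := hS.inter_of_left T
  exact (Set.ncard_pos hfin).mpr ⟨q, h⟩

theorem exists_of_cnt_pos {T : Set (ℕ × ℕ)} (h : 1 ≤ (S ∩ T).ncard) : ∃ s ∈ S, s ∈ T := by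
  have h0 : (S ∩ T).ncard ≠ 0 := by omega
  obtain ⟨s, hs, ht⟩ := Set.nonempty_of_ncard_ne_zero h0
  exact ⟨s, hs, ht⟩

/-- Deleting an element of `S` lying inside the window. -/
theorem cnt_del (hS : S.Finite) {T : Set (ℕ × ℕ)} (hp : p ∈ S) (hmem : p ∈ T) :
    (S ∩ T).ncard = ((S \ {p}) ∩ T).ncard + 1 := by
  have hset : S ∩ T = insert p ((S \ {p}) ∩ T) := by
    ext s
    simp only [Set.mem_inter_iff, Set.mem_insert_iff, Set.mem_diff, Set.mem_singleton_iff]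
    constructor
    · rintro ⟨hs, ht⟩
      by_cases hsp : s = p
      · exact Or.inl hsp
      · exact Or.inr ⟨⟨hs, hsp⟩, ht⟩
    · rintro (rfl | ⟨⟨hs, -⟩, ht⟩)
      · exact ⟨hp, hmem⟩
      · exact ⟨hs, ht⟩
  rw [hset, Set.ncard_insert_of_notMem (by simp) ((Set.Finite.diff hS : (S \ {p}).Finite).inter_of_left T)]

theorem cnt_del_out {T : Set (ℕ × ℕ)} (hmem : p ∉ T) :
    ((S \ {p}) ∩ T) = S ∩ T := by
  ext s
  simp only [Set.mem_inter_iff, Set.mem_diff, Set.mem_singleton_iff]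
  constructor
  · rintro ⟨⟨hs, -⟩, ht⟩; exact ⟨hs, ht⟩
  · rintro ⟨hs, ht⟩
    refine ⟨⟨hs, ?_⟩, ht⟩
    rintro rfl; exact hmem ht

/-- Inserting a new element lying inside the window. -/
theorem cnt_ins (hS : S.Finite) {T : Set (ℕ × ℕ)} (hp : p ∉ S) (hmem : p ∈ T) :
    ((S ∪ {p}) ∩ T).ncard = (S ∩ T).ncard + 1 := by
  have hset : (S ∪ {p}) ∩ T = insert p (S ∩ T) := by
    ext s
    simp only [Set.mem_inter_iff, Set.mem_insert_iff, Set.mem_union, Set.mem_singleton_iff]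
    constructor
    · rintro ⟨hs | rfl, ht⟩
      · exact Or.inr ⟨hs, ht⟩
      · exact Or.inl rfl
    · rintro (rfl | ⟨hs, ht⟩)
      · exact ⟨Or.inr rfl, hmem⟩
      · exact ⟨Or.inl hs, ht⟩
  rw [hset, Set.ncard_insert_of_notMem (by simp [hp]) (hS.inter_of_left T)]

theorem cnt_ins_out {T : Set (ℕ × ℕ)} (hmem : p ∉ T) :
    ((S ∪ {p}) ∩ T) = S ∩ T := by
  ext s
  simp only [Set.mem_inter_iff, Set.mem_union, Set.mem_singleton_iff]
  constructor
  · rintro ⟨hs | rfl, ht⟩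
    · exact ⟨hs, ht⟩
    · exact absurd ht hmem
  · rintro ⟨hs, ht⟩; exact ⟨Or.inl hs, ht⟩

/-- Maximum of a finite nonempty set in reading order. -/
theorem exists_ladder_max (hfin : S.Finite) (hne : S.Nonempty) :
    ∃ m ∈ S, ∀ s ∈ S, LadderLE ℓ s m := by
  obtain ⟨m, hm, hmax⟩ :=
    Set.Finite.exists_maximalFor (fun p => toLex (ladderIdx ℓ p, p.1)) S hfin hne
  refine ⟨m, hm, fun s hs => ?_⟩
  have key : ∀ u v : ℕ × ℕ, (toLex (ladderIdx ℓ u, u.1) ≤ toLex (ladderIdx ℓ v, v.1)) ↔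
      LadderLE ℓ u v := by
    intro u v
    rw [Prod.Lex.le_iff]
    exact Iff.rfl
  rcases le_or_gt (toLex (ladderIdx ℓ s, s.1)) (toLex (ladderIdx ℓ m, m.1)) with h | h
  · exact (key s m).mp h
  · have := hmax hs h.le
    exact (key s m).mp this

theorem exists_ladder_min (hfin : S.Finite) (hne : S.Nonempty) :
    ∃ m ∈ S, ∀ s ∈ S, LadderLE ℓ m s := by
  obtain ⟨m, hm, hmin⟩ :=
    Set.Finite.exists_minimalFor (fun p => toLex (ladderIdx ℓ p, p.1)) S hfin hne
  refine ⟨m, hm, fun s hs => ?_⟩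
  have key : ∀ u v : ℕ × ℕ, (toLex (ladderIdx ℓ u, u.1) ≤ toLex (ladderIdx ℓ v, v.1)) ↔
      LadderLE ℓ u v := by
    intro u v
    rw [Prod.Lex.le_iff]
    exact Iff.rfl
  rcases le_or_gt (toLex (ladderIdx ℓ m, m.1)) (toLex (ladderIdx ℓ s, s.1)) with h | h
  · exact (key m s).mp h
  · have := hmin hs h.le
    exact (key m s).mp this

/-- Counting over the gap `(x, p]` equals counting over `[r₁, p]` when `r₁` is the first
mark after `x`. -/
theorem Iv_min_eq (hsub : S ⊆ M) {x r₁ : ℕ × ℕ}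
    (hmin : ∀ s ∈ M, LadderLT ℓ x s → LadderLE ℓ s p → LadderLE ℓ r₁ s)
    (hxr : LadderLT ℓ x r₁) :
    S ∩ IvL ℓ x p = S ∩ Iv ℓ r₁ p := by
  ext s
  simp only [IvL, Iv, Set.mem_inter_iff, Set.mem_setOf_eq]
  constructor
  · rintro ⟨hs, h1, h2⟩
    exact ⟨hs, hmin s (hsub hs) h1 h2, h2⟩
  · rintro ⟨hs, h1, h2⟩
    exact ⟨hs, ladderLT_of_lt_of_le hxr h1, h2⟩

end Counting

/-! ### Abstract bracket-cancellation lemmas -/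

section BracketCore

variable {ℓ : ℕ} {R A : Set (ℕ × ℕ)} {p : ℕ × ℕ}

/-- If `p` is conormal and the addable box `q > p` is not, there is a removable box in
`(p, q]`. -/
theorem extract_rem (hRf : R.Finite) (hAf : A.Finite) (hp : ConormalIn (LadderLE ℓ) R A p) {q : ℕ × ℕ} (hq : q ∈ A)
    (hpq : LadderLT ℓ p q) (hnq : ¬ ConormalIn (LadderLE ℓ) R A q) :
    ∃ s ∈ R, LadderLT ℓ p s ∧ LadderLE ℓ s q := by
  have hnq' : ∃ r ∈ R ∪ A, LadderLE ℓ r q ∧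
      (A ∩ Iv ℓ r q).ncard ≤ (R ∩ Iv ℓ r q).ncard := by
    by_contra hc
    push_neg at hc
    exact hnq ⟨hq, fun r hr hle => hc r hr hle⟩
  obtain ⟨r, hr, hrq, hcnt⟩ := hnq'
  by_cases hrp : LadderLE ℓ r p
  · have hcp : (R ∩ Iv ℓ r p).ncard < (A ∩ Iv ℓ r p).ncard := hp.2 r hr hrp
    have hsR := Iv_split (S := R) hRf hrp (ladderLT_le hpq)
    have hsA := Iv_split (S := A) hAf hrp (ladderLT_le hpq)
    have hq1 : 1 ≤ (A ∩ IvL ℓ p q).ncard :=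
      cnt_pos_of_mem hAf ⟨hq, hpq, ladderLE_refl _ _⟩
    have hpos : 1 ≤ (R ∩ IvL ℓ p q).ncard := by omega
    obtain ⟨s, hs, h1, h2⟩ := exists_of_cnt_pos hpos
    exact ⟨s, hs, h1, h2⟩
  · have hpr : LadderLT ℓ p r := ladderLT_iff_not_le.mpr hrp
    have hq1 : 1 ≤ (A ∩ Iv ℓ r q).ncard :=
      cnt_pos_of_mem hAf ⟨hq, hrq, ladderLE_refl _ _⟩
    have hpos : 1 ≤ (R ∩ Iv ℓ r q).ncard := by omega
    obtain ⟨s, hs, h1, h2⟩ := exists_of_cnt_pos hpos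
    exact ⟨s, hs, ladderLT_of_lt_of_le hpr h1, h2⟩

/-- If `p` is normal and the removable box `r < p` is not, there is an addable box in
`[r, p)`. -/
theorem extract_add (hRf : R.Finite) (hAf : A.Finite) (hp : NormalIn (LadderLE ℓ) R A p) {r : ℕ × ℕ} (hr : r ∈ R)
    (hrp : LadderLT ℓ r p) (hnr : ¬ NormalIn (LadderLE ℓ) R A r) :
    ∃ t ∈ A, LadderLE ℓ r t ∧ LadderLT ℓ t p := by
  have hnr' : ∃ q ∈ R ∪ A, LadderLE ℓ r q ∧
      (R ∩ Iv ℓ r q).ncard ≤ (A ∩ Iv ℓ r q).ncard := by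
    by_contra hc
    push_neg at hc
    exact hnr ⟨hr, fun q hq hle => hc q hq hle⟩
  obtain ⟨q, hq, hrq, hcnt⟩ := hnr'
  by_cases hpq : LadderLE ℓ p q
  · have hcp : (A ∩ Iv ℓ p q).ncard < (R ∩ Iv ℓ p q).ncard := hp.2 q hq hpq
    have hsR := Iv_split' (S := R) hRf (ladderLT_le hrp) hpq
    have hsA := Iv_split' (S := A) hAf (ladderLT_le hrp) hpq
    have hr1 : 1 ≤ (R ∩ IvR ℓ r p).ncard :=
      cnt_pos_of_mem hRf ⟨hr, ladderLE_refl _ _, hrp⟩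
    have hpos : 1 ≤ (A ∩ IvR ℓ r p).ncard := by omega
    obtain ⟨t, ht, h1, h2⟩ := exists_of_cnt_pos hpos
    exact ⟨t, ht, h1, h2⟩
  · have hqp : LadderLT ℓ q p := ladderLT_iff_not_le.mpr hpq
    have hr1 : 1 ≤ (R ∩ Iv ℓ r q).ncard :=
      cnt_pos_of_mem hRf ⟨hr, ladderLE_refl _ _, hrq⟩
    have hpos : 1 ≤ (A ∩ Iv ℓ r q).ncard := by omega
    obtain ⟨t, ht, h1, h2⟩ := exists_of_cnt_pos hpos
    exact ⟨t, ht, h1, ladderLT_of_le_of_lt h2 hqp⟩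

/-- Flip lemma: the good box, after removal, is the cogood box of the result. -/
theorem flip_cogood (hl : 2 ≤ ℓ) (hRf : R.Finite) (hAf : A.Finite) (hdis : Disjoint R A)
    (hmark : ∀ s ∈ R ∪ A, 1 ≤ s.2)
    (hnorm : NormalIn (LadderLE ℓ) R A p)
    (hleft : ∀ q, NormalIn (LadderLE ℓ) R A q → LadderLE ℓ p q) :
    ConormalIn (LadderLE ℓ) (R \ {p}) (A ∪ {p}) p ∧
      ∀ q, ConormalIn (LadderLE ℓ) (R \ {p}) (A ∪ {p}) q → LadderLE ℓ q p := by
  have hpR : p ∈ R := hnorm.1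
  have hpA : p ∉ A := Set.disjoint_left.mp hdis hpR
  have hp2 : 1 ≤ p.2 := hmark p (Or.inl hpR)
  have hmR : ∀ s ∈ R, 1 ≤ s.2 := fun s hs => hmark s (Or.inl hs)
  have hmA : ∀ s ∈ A, 1 ≤ s.2 := fun s hs => hmark s (Or.inr hs)
  have hselfR : (R ∩ Iv ℓ p p).ncard = 1 := Iv_self_of_mem hl hmR hp2 hpR
  have hselfA : (A ∩ Iv ℓ p p).ncard = 0 := Iv_self_of_not_mem hl hmA hp2 hpA
  -- Main counting claim
  have hK : ∀ r ∈ R ∪ A, LadderLE ℓ r p →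
      (R ∩ Iv ℓ r p).ncard ≤ (A ∩ Iv ℓ r p).ncard + 1 := by
    by_contra hc
    push_neg at hc
    obtain ⟨r0, hr0, hr0p, hr0cnt⟩ := hc
    set Bad : Set (ℕ × ℕ) :=
      {r | r ∈ R ∪ A ∧ LadderLE ℓ r p ∧ (A ∩ Iv ℓ r p).ncard + 2 ≤ (R ∩ Iv ℓ r p).ncard}
      with hBadDef
    have hBf : Bad.Finite := (hRf.union hAf).subset (fun s hs => hs.1)
    have hBn : Bad.Nonempty := ⟨r0, hr0, hr0p, by omega⟩
    obtain ⟨rs, hrs, hrsmax⟩ := exists_ladder_max (ℓ := ℓ) hBf hBn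
    obtain ⟨hrsm, hrsp, hrscnt⟩ := hrs
    have hrs2 : 1 ≤ rs.2 := hmark rs hrsm
    have hrsnep : rs ≠ p := by
      rintro rfl
      rw [Iv_self_of_mem hl hmR hp2 hpR, Iv_self_of_not_mem hl hmA hp2 hpA] at hrscnt
      omega
    have hrslt : LadderLT ℓ rs p := by
      rw [ladderLT_iff_not_le]
      intro hle
      exact hrsnep (ladderLE_antisymm hl hrs2 hp2 hrsp hle)
    have hNn : ((R ∪ A) ∩ IvL ℓ rs p).Nonempty := ⟨p, Or.inl hpR, hrslt, ladderLE_refl _ _⟩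
    obtain ⟨r1, hr1mem, hr1min⟩ := exists_ladder_min (ℓ := ℓ)
      ((hRf.union hAf).inter_of_left _) hNn
    obtain ⟨hr1M, hr1gt, hr1le⟩ := hr1mem
    have hidR : R ∩ IvL ℓ rs p = R ∩ Iv ℓ r1 p :=
      Iv_min_eq Set.subset_union_left (fun s hs h1 h2 => hr1min s ⟨hs, h1, h2⟩) hr1gt
    have hidA : A ∩ IvL ℓ rs p = A ∩ Iv ℓ r1 p :=
      Iv_min_eq Set.subset_union_right (fun s hs h1 h2 => hr1min s ⟨hs, h1, h2⟩) hr1gt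
    have hsplR := Iv_split (S := R) hRf (ladderLE_refl ℓ rs) hrsp
    have hsplA := Iv_split (S := A) hAf (ladderLE_refl ℓ rs) hrsp
    rw [hidR] at hsplR
    rw [hidA] at hsplA
    have hr1cnt : (R ∩ Iv ℓ r1 p).ncard ≤ (A ∩ Iv ℓ r1 p).ncard + 1 := by
      by_contra hc2
      have hbad : r1 ∈ Bad := ⟨hr1M, hr1le, by omega⟩
      exact (ladderLT_iff_not_le.mp hr1gt) (hrsmax r1 hbad)
    have hrsR : rs ∈ R := by
      rcases hrsm with h | h
      · exact h
      · exfalso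
        have hsA1 : (A ∩ Iv ℓ rs rs).ncard = 1 := Iv_self_of_mem hl hmA hrs2 h
        have hsR1 : (R ∩ Iv ℓ rs rs).ncard = 0 :=
          Iv_self_of_not_mem hl hmR hrs2 (Set.disjoint_right.mp hdis h)
        omega
    have hrsnorm : NormalIn (LadderLE ℓ) R A rs := by
      refine ⟨hrsR, fun q hq hrsq => ?_⟩
      show (A ∩ Iv ℓ rs q).ncard < (R ∩ Iv ℓ rs q).ncard
      by_cases hpq : LadderLE ℓ p q
      · have hnq : (A ∩ Iv ℓ p q).ncard < (R ∩ Iv ℓ p q).ncard := hnorm.2 q hq hpq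
        have hsplR2 := Iv_split (S := R) hRf hrsp hpq
        have hsplA2 := Iv_split (S := A) hAf hrsp hpq
        have hsplR3 := Iv_split (S := R) hRf (ladderLE_refl ℓ p) hpq
        have hsplA3 := Iv_split (S := A) hAf (ladderLE_refl ℓ p) hpq
        omega
      · have hqp : LadderLT ℓ q p := ladderLT_iff_not_le.mpr hpq
        have hsplR2 := Iv_split (S := R) hRf hrsq (ladderLT_le hqp)
        have hsplA2 := Iv_split (S := A) hAf hrsq (ladderLT_le hqp)
        have hNn2 : ((R ∪ A) ∩ IvL ℓ q p).Nonempty :=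
          ⟨p, Or.inl hpR, hqp, ladderLE_refl _ _⟩
        obtain ⟨r2, hr2mem, hr2min⟩ := exists_ladder_min (ℓ := ℓ)
          ((hRf.union hAf).inter_of_left _) hNn2
        obtain ⟨hr2M, hr2gt, hr2le⟩ := hr2mem
        have hidR2 : R ∩ IvL ℓ q p = R ∩ Iv ℓ r2 p :=
          Iv_min_eq Set.subset_union_left (fun s hs h1 h2 => hr2min s ⟨hs, h1, h2⟩) hr2gt
        have hidA2 : A ∩ IvL ℓ q p = A ∩ Iv ℓ r2 p :=
          Iv_min_eq Set.subset_union_right (fun s hs h1 h2 => hr2min s ⟨hs, h1, h2⟩) hr2gt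
        have hr2cnt : (R ∩ Iv ℓ r2 p).ncard ≤ (A ∩ Iv ℓ r2 p).ncard + 1 := by
          by_contra hc2
          have hbad : r2 ∈ Bad := ⟨hr2M, hr2le, by omega⟩
          exact (ladderLT_iff_not_le.mp (ladderLT_of_le_of_lt hrsq hr2gt)) (hrsmax r2 hbad)
        rw [hidR2] at hsplR2
        rw [hidA2] at hsplA2
        omega
    exact (ladderLT_iff_not_le.mp hrslt) (hleft rs hrsnorm)
  constructor
  · refine ⟨Or.inr rfl, fun r hr hrp => ?_⟩
    show ((R \ {p}) ∩ Iv ℓ r p).ncard < ((A ∪ {p}) ∩ Iv ℓ r p).ncard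
    have hpIv : p ∈ Iv ℓ r p := ⟨hrp, ladderLE_refl _ _⟩
    have hdel := cnt_del (S := R) hRf hpR hpIv
    have hins := cnt_ins (S := A) hAf hpA hpIv
    simp only [Set.mem_union, Set.mem_diff, Set.mem_singleton_iff] at hr
    rcases hr with ⟨hrR, -⟩ | hrA | heq
    · have := hK r (Or.inl hrR) hrp
      omega
    · have := hK r (Or.inr hrA) hrp
      omega
    · have hmemr : r ∈ R ∪ A := by rw [heq]; exact Or.inl hpR
      have := hK r hmemr hrp
      omega
  · intro q hq
    by_contra hc
    have hpq : LadderLT ℓ p q := ladderLT_iff_not_le.mpr hc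
    have hqne : q ≠ p := by
      rintro rfl
      exact (ladderLT_iff_not_le.mp hpq) (ladderLE_refl _ _)
    have hqA : q ∈ A := by
      rcases hq.1 with h | h
      · exact h
      · exact absurd h hqne
    have hNn3 : ((R ∪ A) ∩ IvL ℓ p q).Nonempty := ⟨q, Or.inr hqA, hpq, ladderLE_refl _ _⟩
    obtain ⟨r3, hr3mem, hr3min⟩ := exists_ladder_min (ℓ := ℓ)
      ((hRf.union hAf).inter_of_left _) hNn3
    obtain ⟨hr3M, hr3gt, hr3le⟩ := hr3mem
    have hidR3 : R ∩ IvL ℓ p q = R ∩ Iv ℓ r3 q :=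
      Iv_min_eq Set.subset_union_left (fun s hs h1 h2 => hr3min s ⟨hs, h1, h2⟩) hr3gt
    have hidA3 : A ∩ IvL ℓ p q = A ∩ Iv ℓ r3 q :=
      Iv_min_eq Set.subset_union_right (fun s hs h1 h2 => hr3min s ⟨hs, h1, h2⟩) hr3gt
    have hr3mem' : r3 ∈ (R \ {p}) ∪ (A ∪ {p}) := by
      rcases hr3M with h | h
      · exact Or.inl ⟨h, fun he =>
          (ladderLT_iff_not_le.mp hr3gt) (he ▸ ladderLE_refl ℓ p)⟩
      · exact Or.inr (Or.inl h)
    have hcq : ((R \ {p}) ∩ Iv ℓ r3 q).ncard < ((A ∪ {p}) ∩ Iv ℓ r3 q).ncard :=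
      hq.2 r3 hr3mem' hr3le
    have hpnot : p ∉ Iv ℓ r3 q := fun hmem => (ladderLT_iff_not_le.mp hr3gt) hmem.1
    rw [cnt_del_out hpnot, cnt_ins_out hpnot] at hcq
    have hnq : (A ∩ Iv ℓ p q).ncard < (R ∩ Iv ℓ p q).ncard :=
      hnorm.2 q (Or.inr hqA) (ladderLT_le hpq)
    have hsplR4 := Iv_split (S := R) hRf (ladderLE_refl ℓ p) (ladderLT_le hpq)
    have hsplA4 := Iv_split (S := A) hAf (ladderLE_refl ℓ p) (ladderLT_le hpq)
    rw [hidR3] at hsplR4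
    rw [hidA3] at hsplA4
    omega

end BracketCore

end YPartition



noncomputable section
namespace YPartition

/-! ### The bad-box condition -/

/-- `P` has a box `(a,b)` with hook length `ℓ · arm`. -/
def Pbad (ℓ : ℕ) (P : YPartition) : Prop :=
  ∃ a b m : ℕ, 1 ≤ a ∧ 1 ≤ b ∧ 1 ≤ m ∧ P.part a = b + m ∧
    P.colLen b + 1 = a + (ℓ - 1) * m

theorem sub_one_mul_add (ℓ m : ℕ) (hl : 1 ≤ ℓ) : (ℓ - 1) * m + m = ℓ * m := by
  obtain ⟨k, rfl⟩ : ∃ k, ℓ = k + 1 := ⟨ℓ - 1, by omega⟩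
  simp only [Nat.add_sub_cancel]
  ring

theorem pbad_iff {ℓ : ℕ} (hl : 2 ≤ ℓ) (P : YPartition) :
    Pbad ℓ P ↔ ∃ p : ℕ × ℕ, p ∈ P.cells ∧ P.hook p.1 p.2 = ℓ * P.arm p.1 p.2 := by
  constructor
  · rintro ⟨a, b, m, ha, hb, hm, hpart, hcol⟩
    refine ⟨(a, b), ⟨ha, hb, by dsimp only; omega⟩, ?_⟩
    unfold hook arm
    dsimp only
    have hcl : a ≤ P.colLen b := (le_colLen_iff hb ha).mpr (by omega)
    have harm : P.part a - b = m := by omega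
    rw [harm]
    have hkey := sub_one_mul_add ℓ m (by omega)
    omega
  · rintro ⟨⟨a, b⟩, hmem, heq⟩
    have hcl : a ≤ P.colLen b := colLen_ge_of_mem hmem
    obtain ⟨ha, hb, hble⟩ := hmem
    dsimp only at ha hb hble heq
    unfold hook arm at heq
    rcases Nat.eq_zero_or_pos (P.part a - b) with h0 | h0
    · rw [h0, Nat.mul_zero] at heq
      omega
    · set m := P.part a - b with hmdef
      have hkey := sub_one_mul_add ℓ m (by omega)
      exact ⟨a, b, m, ha, hb, h0, by omega, by omega⟩

theorem emptyP_not_bad (ℓ : ℕ) : ¬ Pbad ℓ emptyP := by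
  rintro ⟨a, b, m, -, hb, hm, hpart, -⟩
  have h0 : emptyP.part a = 0 := rfl
  omega

/-! ### More order helpers -/

theorem not_le_right {ℓ x y : ℕ} (hl : 2 ≤ ℓ) (hy : 1 ≤ y) :
    ¬ LadderLE ℓ (x, y + 1) (x, y) := by
  intro h
  unfold LadderLE ladderIdx at h
  dsimp only at h
  simp only [Nat.add_sub_cancel] at h
  have hmul : (ℓ - 1) * (y - 1) < (ℓ - 1) * y :=
    Nat.mul_lt_mul_of_pos_left (by omega) (by omega)
  omega

theorem not_le_down {ℓ x y : ℕ} : ¬ LadderLE ℓ (x + 1, y) (x, y) := by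
  intro h
  unfold LadderLE ladderIdx at h
  dsimp only at h
  omega

theorem idx_ge_of_res_eq_lt {ℓ : ℕ} (hl : 2 ≤ ℓ) {p q : ℕ × ℕ} (hp : 1 ≤ p.2)
    (hq : 1 ≤ q.2) (h : res ℓ p = res ℓ q) (hlt : ladderIdx ℓ p < ladderIdx ℓ q) :
    ladderIdx ℓ p + ℓ ≤ ladderIdx ℓ q := by
  obtain ⟨k, hk⟩ := idx_dvd_of_res_eq hl hp hq h
  have hk1 : 1 ≤ k := by
    by_contra hc
    have hk0 : k ≤ 0 := by omega
    have : (ℓ : ℤ) * k ≤ 0 :=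
      mul_nonpos_of_nonneg_of_nonpos (by positivity) (by omega)
    omega
  have : (ℓ : ℤ) * 1 ≤ (ℓ : ℤ) * k :=
    mul_le_mul_of_nonneg_left (by omega) (by positivity)
  omega

theorem res_diag (ℓ x y : ℕ) : res ℓ (x + 1, y + 1) = res ℓ (x, y) := by
  unfold res
  dsimp only
  norm_num

theorem idx_diag {ℓ x y : ℕ} (hl : 1 ≤ ℓ) (hy : 1 ≤ y) :
    ladderIdx ℓ (x + 1, y + 1) = ladderIdx ℓ (x, y) + ℓ := by
  unfold ladderIdx
  dsimp only
  simp only [Nat.add_sub_cancel]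
  rw [show y = (y - 1) + 1 by omega, Nat.mul_add]
  have : y - 1 + 1 - 1 = y - 1 := by omega
  rw [this]
  omega

/-- Residue is preserved along ladder shifts. -/
theorem res_shift {ℓ : ℕ} (hl : 2 ≤ ℓ) {x y j : ℕ} (hj : j + 1 ≤ y) :
    res ℓ (x + (ℓ - 1) * j, y - j) = res ℓ (x, y) := by
  rw [res_eq_iff (by omega)]
  refine ⟨(j : ℤ), ?_⟩
  have h1 : ((y - j : ℕ) : ℤ) = (y : ℤ) - j := by
    rw [Nat.cast_sub (by omega)]
  have h2 : (((ℓ - 1) * j : ℕ) : ℤ) = ((ℓ : ℤ) - 1) * j := by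
    rw [Nat.cast_mul, Nat.cast_sub (by omega : 1 ≤ ℓ)]
    norm_num
  push_cast [h1, h2]
  ring

theorem mk_cell {P : YPartition} {a b : ℕ} (h1 : 1 ≤ a) (h2 : 1 ≤ b)
    (h3 : b ≤ P.part a) : (a, b) ∈ P.cells := ⟨h1, h2, h3⟩

/-! ### L3: a good nonempty partition has a normal box -/

theorem exists_normal {ℓ : ℕ} (hl : 2 < ℓ) (P : YPartition) (hgood : ¬ Pbad ℓ P)
    (hne : P.cells.Nonempty) :
    ∃ x y : ℕ, (x, y) ∈ P.cells ∧
      NormalIn (LadderLE ℓ) (RemovableRes ℓ (res ℓ (x, y)) P)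
        (AddableRes ℓ (res ℓ (x, y)) P) (x, y) := by
  obtain ⟨⟨x, y⟩, hq, hqmax⟩ := exists_ladder_max (ℓ := ℓ) P.cells_finite hne
  obtain ⟨hx1, hy1, hyle⟩ := hq
  dsimp only at hx1 hy1 hyle
  -- the last cell is removable
  have hrx : P.part x = y := by
    by_contra hc
    have hcell : (x, y + 1) ∈ P.cells := mk_cell hx1 (by omega) (by omega)
    exact not_le_right (by omega) hy1 (hqmax _ hcell)
  have hrnext : P.part (x + 1) < y := by
    by_contra hc
    have hcell : (x + 1, y) ∈ P.cells := mk_cell (by omega) hy1 (by omega)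
    exact not_le_down (hqmax _ hcell)
  have hqR : (x, y) ∈ RemovableRes ℓ (res ℓ (x, y)) P :=
    mem_removableRes.mpr ⟨hx1, hrx.symm, hrnext, rfl⟩
  -- all residue-i marks are ≤ (x,y)
  have hnomark : ∀ t ∈ RemovableRes ℓ (res ℓ (x, y)) P ∪ AddableRes ℓ (res ℓ (x, y)) P,
      LadderLE ℓ t (x, y) := by
    rintro ⟨c, d⟩ (ht | ht)
    · have : (c, d) ∈ P.cells := by
        rw [mem_removableRes] at ht
        exact mk_cell ht.1 (by omega) (by omega)
      exact hqmax _ this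
    · rw [mem_addableRes] at ht
      obtain ⟨hc1, hc2, hc3, hc4⟩ := ht
      by_contra hcon
      have hlt : LadderLT ℓ (x, y) (c, d) := ladderLT_iff_not_le.mpr hcon
      have hd1 : 1 ≤ d := by omega
      have hidxle : ladderIdx ℓ (x, y) ≤ ladderIdx ℓ (c, d) :=
        idx_le_of_le (ladderLT_le hlt)
      by_cases hidx : ladderIdx ℓ (c, d) = ladderIdx ℓ (x, y)
      · -- same ladder, lower: gives a bad pair
        have hrowlt : x < c := by
          unfold LadderLT at hlt
          dsimp only at hlt
          omega
        obtain ⟨j, hj1, hj2, hj3, hj4⟩ :=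
          ladder_param (by omega) (p := (x, y)) (q := (c, d)) hy1 hd1 hidx.symm hrowlt
        dsimp only at hj2 hj3 hj4
        apply hgood
        refine ⟨x, d, j, hx1, hd1, hj1, by omega, ?_⟩
        have h5 : P.colLen d = c - 1 := by
          apply colLen_eq_of hd1
          · right
            rcases hc3 with h | h
            · omega
            · exact h
          · rw [show c - 1 + 1 = c by omega]
            omega
        omega
      · -- strictly later residue ladder: there is a cell after (x,y), contradiction
        have hge : ladderIdx ℓ (x, y) + ℓ ≤ ladderIdx ℓ (c, d) :=
          idx_ge_of_res_eq_lt (by omega) hy1 hd1 hc4.symm (by omega)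
        by_cases hd2 : 2 ≤ d
        · have hcell : (c, d - 1) ∈ P.cells := mk_cell hc1 (by omega) (by omega)
          have hle2 := idx_le_of_le (hqmax _ hcell)
          have hidc : ladderIdx ℓ (c, d - 1) + (ℓ - 1) = ladderIdx ℓ (c, d) := by
            unfold ladderIdx
            dsimp only
            rw [show d - 1 = (d - 1 - 1) + 1 by omega, Nat.mul_add]
            rw [show d - 1 - 1 + 1 - 1 = d - 1 - 1 by omega]
            omega
          omega
        · -- d = 1
          have hd1' : d = 1 := by omega
          subst hd1'
          have hc2' : P.part c = 0 := by omega
          have hcge : 2 ≤ c := by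
            by_contra hcc
            have hc1' : c = 1 := by omega
            subst hc1'
            have : 1 ≤ ladderIdx ℓ (x, y) := by
              unfold ladderIdx; omega
            have : ladderIdx ℓ (1, 1) = 1 := by
              unfold ladderIdx; simp
            omega
          have hprev : 1 ≤ P.part (c - 1) := by
            rcases hc3 with h | h
            · omega
            · omega
          have hcell : (c - 1, 1) ∈ P.cells := mk_cell (by omega) le_rfl hprev
          have hle2 := idx_le_of_le (hqmax _ hcell)
          have hi1 : ladderIdx ℓ (c - 1, 1) = c - 1 := by
            unfold ladderIdx; simp
          have hi2 : ladderIdx ℓ (c, 1) = c := by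
            unfold ladderIdx; simp
          omega
  refine ⟨x, y, mk_cell hx1 hy1 hyle, hqR, fun t ht hle => ?_⟩
  have ht2 : 1 ≤ t.2 := by
    rcases ht with h | h
    · exact (removable_pos h).2
    · exact (addable_pos h).2
  have hteq : t = (x, y) := ladderLE_antisymm (by omega) ht2 hy1 (hnomark t ht) hle
  subst hteq
  show (AddableRes ℓ (res ℓ (x, y)) P ∩ Iv ℓ (x, y) (x, y)).ncard <
    (RemovableRes ℓ (res ℓ (x, y)) P ∩ Iv ℓ (x, y) (x, y)).ncard
  rw [Iv_self_of_mem (by omega) (fun s hs => (removable_pos hs).2) ht2 hqR,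
    Iv_self_of_not_mem (by omega) (fun s hs => (addable_pos hs).2) ht2
      (Set.disjoint_left.mp (rem_add_disjoint ℓ (res ℓ (x, y)) P) hqR)]
  omega

end YPartition



noncomputable section
namespace YPartition

/-- L5: adding the cogood box preserves goodness. -/
theorem good_insert {ℓ : ℕ} (hl : 2 < ℓ) {P Q : YPartition} {x y : ℕ}
    (hco : LadderCogood ℓ (res ℓ (x, y)) P (x, y))
    (hQ : ∀ a, Q.part a = if a = x then y else P.part a)
    (hgood : ¬ Pbad ℓ P) : ¬ Pbad ℓ Q := by
  obtain ⟨hcon, hmaxc⟩ := hco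
  have hpA : (x, y) ∈ AddableRes ℓ (res ℓ (x, y)) P := hcon.1
  rw [mem_addableRes] at hpA
  obtain ⟨hx1, hyx, hxprev, -⟩ := hpA
  have hy1 : 1 ≤ y := by omega
  have hRf := removableRes_finite ℓ (res ℓ (x, y)) P
  have hAf := addableRes_finite ℓ (res ℓ (x, y)) P
  rintro ⟨a, b, m, ha, hb, hm, hpart, hcol⟩
  rw [hQ a] at hpart
  have hem2 : 2 ≤ (ℓ - 1) * m := by
    have h := Nat.mul_le_mul (show 2 ≤ ℓ - 1 by omega) (show 1 ≤ m by omega)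
    omega
  by_cases hax : a = x
  · -- Case A : new bad box in row x
    rw [if_pos hax] at hpart
    have hbny : b ≠ y := by omega
    rw [hax] at hcol
    rw [colLen_add_ne hQ hx1 (by omega) hb hbny] at hcol
    -- P.colLen b = x + (ℓ-1)*m - 1
    have hpcb : P.part (x + (ℓ - 1) * m) < b := by
      have h2 := le_colLen_iff (P := P) hb (a := x + (ℓ - 1) * m) (by omega)
      omega
    have hprevcol : b ≤ P.part (x + (ℓ - 1) * m - 1) := by
      apply (le_colLen_iff (P := P) hb (a := x + (ℓ - 1) * m - 1) (by omega)).mp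
      omega
    by_cases hsub : P.part (x + (ℓ - 1) * m) + 1 = b
    · -- the gap is an addable box on the ladder of (x,y)
      have hresg : res ℓ (x + (ℓ - 1) * m, b) = res ℓ (x, y) := by
        rw [show b = y - m from by omega]
        exact res_shift (by omega) (by omega)
      have hidxg : ladderIdx ℓ (x + (ℓ - 1) * m, b) = ladderIdx ℓ (x, y) := by
        rw [show b = y - m from by omega]
        exact idx_shift (by omega)
      have hgA : (x + (ℓ - 1) * m, b) ∈ AddableRes ℓ (res ℓ (x, y)) P :=
        mem_addableRes.mpr ⟨by omega, by omega, Or.inr hprevcol, hresg⟩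
      have hlt : LadderLT ℓ (x, y) (x + (ℓ - 1) * m, b) := Or.inr ⟨hidxg.symm, by omega⟩
      have hnotcon : ¬ ConormalIn (LadderLE ℓ) (RemovableRes ℓ (res ℓ (x, y)) P)
          (AddableRes ℓ (res ℓ (x, y)) P) (x + (ℓ - 1) * m, b) := by
        intro hcg
        exact (ladderLT_iff_not_le.mp hlt) (hmaxc _ hcg)
      obtain ⟨⟨sc, sd⟩, hsR, hs1, hs2⟩ := extract_rem hRf hAf hcon hgA hlt hnotcon
      rw [mem_removableRes] at hsR
      obtain ⟨hsc1, hsd, hsnext, hsres⟩ := hsR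
      have hsd1 : 1 ≤ sd := by omega
      have hidxs : ladderIdx ℓ (sc, sd) = ladderIdx ℓ (x, y) := by
        have h1 := idx_le_of_le (ladderLT_le hs1)
        have h2 := idx_le_of_le hs2
        omega
      have hrowlt : x < sc := by
        rcases hs1 with h | h
        · omega
        · exact h.2
      obtain ⟨j, hj1, hj2, hj3, hj4⟩ :=
        ladder_param (by omega) (p := (x, y)) (q := (sc, sd)) hy1 hsd1 hidxs.symm hrowlt
      dsimp only at hj2 hj3 hj4
      -- j ≤ m
      have hjm : j ≤ m := by
        have hrowle : sc ≤ x + (ℓ - 1) * m := by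
          rcases hs2 with h | h
          · omega
          · exact h.2
        have : (ℓ - 1) * j ≤ (ℓ - 1) * m := by omega
        exact Nat.le_of_mul_le_mul_left this (by omega)
      have hjnem : j ≠ m := by
        intro hje
        subst hje
        rw [hj3] at hsd
        omega
      apply hgood
      refine ⟨sc, b, m - j, by omega, hb, by omega, by omega, ?_⟩
      have hmj : (ℓ - 1) * (m - j) + (ℓ - 1) * j = (ℓ - 1) * m := by
        rw [← Nat.mul_add, show m - j + j = m by omega]
      omega
    · -- the gap column is two short: bad pair in column b-1
      apply hgood
      have hb2 : 2 ≤ b := by omega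
      refine ⟨x, b - 1, m, hx1, by omega, hm, by omega, ?_⟩
      have hcl : P.colLen (b - 1) = x + (ℓ - 1) * m - 1 := by
        apply colLen_eq_of (by omega)
        · right
          apply (le_colLen_iff (P := P) (by omega : 1 ≤ b - 1)
            (a := x + (ℓ - 1) * m - 1) (by omega)).mp
          have hmono := P.antitone (x + (ℓ - 1) * m - 1) (x + (ℓ - 1) * m - 1) (by omega) le_rfl
          -- b - 1 ≤ colLen (b-1): from b ≤ part (x+em-1): monotone of colLen? direct:
          have : b - 1 ≤ P.part (x + (ℓ - 1) * m - 1) := by omega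
          have := (le_colLen_iff (P := P) (by omega : 1 ≤ b - 1)
            (a := x + (ℓ - 1) * m - 1) (by omega)).mpr this
          omega
        · rw [show x + (ℓ - 1) * m - 1 + 1 = x + (ℓ - 1) * m by omega]
          omega
      omega
  · -- Case B : bad box in another row
    rw [if_neg hax] at hpart
    by_cases hby : b = y
    · rw [hby] at hpart hcol hb
      rw [colLen_add_self hQ hx1 (by omega)] at hcol
      -- a + (ℓ-1)m = x + 1
      have ha2 : a + (ℓ - 1) * m = x + 1 := by omega
      have hrowa : a < x := by omega
      by_cases hB1 : 2 ≤ a ∧ P.part (a - 1) = y + m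
      · obtain ⟨ha1', hpa1⟩ := hB1
        apply hgood
        refine ⟨a - 1, y, m, by omega, hb, hm, by omega, ?_⟩
        have hcly : P.colLen y = x - 1 := by
          apply colLen_eq_of hb
          · right
            rcases hxprev with h | h
            · omega
            · exact h
          · rw [show x - 1 + 1 = x by omega]
            omega
        omega
      · -- the position (a, y+m+1) is addable of the same residue, one ladder later
        have haB2 : a = 1 ∨ y + m + 1 ≤ P.part (a - 1) := by
          rcases Nat.eq_zero_or_pos (a - 1) with h0 | h0
          · left; omega
          · right
            have hmono := P.antitone (a - 1) a h0 (by omega)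
            have : P.part (a - 1) ≠ y + m := fun hcc => hB1 ⟨by omega, hcc⟩
            omega
        have hresq : res ℓ (a, y + m + 1) = res ℓ (x, y) := by
          have h1 : res ℓ (a + (ℓ - 1) * m, (y + m + 1) - m) = res ℓ (a, y + m + 1) :=
            res_shift (by omega) (by omega)
          rw [show (y + m + 1) - m = y + 1 by omega, ha2] at h1
          rw [← h1]
          exact res_diag ℓ x y
        have hidxq : ladderIdx ℓ (a, y + m + 1) = ladderIdx ℓ (x, y) + ℓ := by
          have h1 : ladderIdx ℓ (a + (ℓ - 1) * m, (y + m + 1) - m) =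
              ladderIdx ℓ (a, y + m + 1) := idx_shift (by omega)
          rw [show (y + m + 1) - m = y + 1 by omega, ha2] at h1
          rw [← h1, idx_diag (by omega) hb]
        have hqA : (a, y + m + 1) ∈ AddableRes ℓ (res ℓ (x, y)) P :=
          mem_addableRes.mpr ⟨ha, by omega, haB2, hresq⟩
        have hlt : LadderLT ℓ (x, y) (a, y + m + 1) := Or.inl (by omega)
        have hnotcon : ¬ ConormalIn (LadderLE ℓ) (RemovableRes ℓ (res ℓ (x, y)) P)
            (AddableRes ℓ (res ℓ (x, y)) P) (a, y + m + 1) := by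
          intro hcg
          exact (ladderLT_iff_not_le.mp hlt) (hmaxc _ hcg)
        obtain ⟨⟨sc, sd⟩, hsR, hs1, hs2⟩ := extract_rem hRf hAf hcon hqA hlt hnotcon
        rw [mem_removableRes] at hsR
        obtain ⟨hsc1, hsd, hsnext, hsres⟩ := hsR
        have hsd1 : 1 ≤ sd := by omega
        have hidxcases : ladderIdx ℓ (sc, sd) = ladderIdx ℓ (x, y) ∨
            ladderIdx ℓ (sc, sd) = ladderIdx ℓ (x, y) + ℓ := by
          apply idx_cases_of_res_eq (by omega) hy1 hsd1 hsres.symm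
          · exact idx_le_of_le (ladderLT_le hs1)
          · have := idx_le_of_le hs2
            omega
        rcases hidxcases with hidxs | hidxs
        · -- s on the ladder of (x,y), below it
          have hrowlt : x < sc := by
            rcases hs1 with h | h
            · omega
            · exact h.2
          obtain ⟨j, hj1, hj2, hj3, hj4⟩ :=
            ladder_param (by omega) (p := (x, y)) (q := (sc, sd)) hy1 hsd1 hidxs.symm hrowlt
          dsimp only at hj2 hj3 hj4
          apply hgood
          refine ⟨a, sd, m + j, ha, hsd1, by omega, by omega, ?_⟩
          have hclsd : P.colLen sd = x + (ℓ - 1) * j := by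
            apply colLen_eq_of hsd1
            · right
              rw [← hj3]
              omega
            · rw [← hj3]
              omega
          have hsplit : (ℓ - 1) * (m + j) = (ℓ - 1) * m + (ℓ - 1) * j := Nat.mul_add _ _ _
          omega
        · -- s on the next residue ladder, above (a, y+m+1)
          have hrowlt : sc < a := by
            have hrowle : sc ≤ a := by
              rcases hs2 with h | h
              · omega
              · exact h.2
            rcases Nat.lt_or_ge sc a with h | h
            · exact h
            · exfalso
              have hsca : sc = a := by omega
              subst hsca
              -- then sd = y+m+1 by ladder index equality, but part sc = y + m
              have : (ℓ - 1) * (sd - 1) = (ℓ - 1) * (y + m + 1 - 1) := by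
                unfold ladderIdx at hidxs hidxq
                dsimp only at hidxs hidxq
                omega
              have := Nat.eq_of_mul_eq_mul_left (show 0 < ℓ - 1 by omega) this
              omega
          obtain ⟨k, hk1, hk2, hk3, hk4⟩ :=
            ladder_param (by omega) (p := (sc, sd)) (q := (a, y + m + 1)) hsd1
              (show (1:ℕ) ≤ (a, y + m + 1).2 from by dsimp only; omega)
              (show ladderIdx ℓ (sc, sd) = ladderIdx ℓ (a, y + m + 1) from by omega) hrowlt
          dsimp only at hk2 hk3 hk4
          apply hgood
          refine ⟨sc, y + m + 1, k, hsc1, by omega, hk1, by omega, ?_⟩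
          have hcl : P.colLen (y + m + 1) = a - 1 := by
            apply colLen_eq_of (by omega)
            · right
              rcases haB2 with h | h
              · omega
              · exact h
            · rw [show a - 1 + 1 = a by omega]
              omega
          omega
    · -- column b untouched: bad pair already in P
      rw [colLen_add_ne hQ hx1 (by omega) hb hby] at hcol
      exact hgood ⟨a, b, m, ha, hb, hm, hpart, hcol⟩

end YPartition



noncomputable section
namespace YPartition

/-- L4: removing the good box preserves goodness. -/
theorem good_remove {ℓ : ℕ} (hl : 2 < ℓ) {P Q : YPartition} {x y : ℕ}
    (hgb : LadderGood ℓ (res ℓ (x, y)) P (x, y))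
    (hQ : ∀ a, Q.part a = if a = x then y - 1 else P.part a)
    (hgood : ¬ Pbad ℓ P) : ¬ Pbad ℓ Q := by
  obtain ⟨hnorm, hminn⟩ := hgb
  have hpR : (x, y) ∈ RemovableRes ℓ (res ℓ (x, y)) P := hnorm.1
  rw [mem_removableRes] at hpR
  obtain ⟨hx1, hyx, hnext, -⟩ := hpR
  have hy1 : 1 ≤ y := by omega
  have hRf := removableRes_finite ℓ (res ℓ (x, y)) P
  have hAf := addableRes_finite ℓ (res ℓ (x, y)) P
  rintro ⟨a, b, m, ha, hb, hm, hpart, hcol⟩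
  rw [hQ a] at hpart
  have hem2 : 2 ≤ (ℓ - 1) * m := by
    have h := Nat.mul_le_mul (show 2 ≤ ℓ - 1 by omega) (show 1 ≤ m by omega)
    omega
  by_cases hax : a = x
  · -- Case A : bad box in row x of Q
    rw [if_pos hax] at hpart
    -- y - 1 = b + m, so y ≥ 3 and b < y
    have hbny : b ≠ y := by omega
    rw [hax] at hcol
    rw [colLen_rem_ne hQ hx1 hyx.symm hnext hb hbny] at hcol
    -- P.colLen b + 1 = x + (ℓ-1)*m
    have hpcb : P.part (x + (ℓ - 1) * m) < b := by
      have h2 := le_colLen_iff (P := P) hb (a := x + (ℓ - 1) * m) (by omega)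
      omega
    have hprevcol : b ≤ P.part (x + (ℓ - 1) * m - 1) := by
      apply (le_colLen_iff (P := P) hb (a := x + (ℓ - 1) * m - 1) (by omega)).mp
      omega
    by_cases hup : P.part (x + (ℓ - 1) * m - 1) = b
    · -- the box above the gap is removable, one residue ladder earlier
      have hresr : res ℓ (x + (ℓ - 1) * m - 1, b) = res ℓ (x, y) := by
        have h1 : res ℓ (x + (ℓ - 1) * m - 1 + 1, b + 1) =
            res ℓ (x + (ℓ - 1) * m - 1, b) := res_diag ℓ _ _
        rw [show x + (ℓ - 1) * m - 1 + 1 = x + (ℓ - 1) * m by omega] at h1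
        rw [← h1, show b + 1 = y - m from by omega]
        exact res_shift (by omega) (by omega)
      have hidxr : ladderIdx ℓ (x + (ℓ - 1) * m - 1, b) + ℓ = ladderIdx ℓ (x, y) := by
        have h1 : ladderIdx ℓ (x + (ℓ - 1) * m - 1 + 1, b + 1) =
            ladderIdx ℓ (x + (ℓ - 1) * m - 1, b) + ℓ := idx_diag (by omega) hb
        rw [show x + (ℓ - 1) * m - 1 + 1 = x + (ℓ - 1) * m by omega] at h1
        rw [← h1, show b + 1 = y - m from by omega]
        exact idx_shift (by omega)
      have hrR : (x + (ℓ - 1) * m - 1, b) ∈ RemovableRes ℓ (res ℓ (x, y)) P := by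
        apply mem_removableRes.mpr
        refine ⟨by omega, hup.symm, ?_, hresr⟩
        rw [show x + (ℓ - 1) * m - 1 + 1 = x + (ℓ - 1) * m by omega]
        omega
      have hltr : LadderLT ℓ (x + (ℓ - 1) * m - 1, b) (x, y) := Or.inl (by omega)
      have hnotnorm : ¬ NormalIn (LadderLE ℓ) (RemovableRes ℓ (res ℓ (x, y)) P)
          (AddableRes ℓ (res ℓ (x, y)) P) (x + (ℓ - 1) * m - 1, b) := by
        intro hn
        have := hminn _ hn
        have := idx_le_of_le this
        omega
      obtain ⟨⟨tc, td⟩, htA, ht1, ht2⟩ := extract_add hRf hAf hnorm hrR hltr hnotnorm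
      rw [mem_addableRes] at htA
      obtain ⟨htc1, htd, htprev, htres⟩ := htA
      have htd1 : 1 ≤ td := by omega
      have hidxcases : ladderIdx ℓ (tc, td) = ladderIdx ℓ (x + (ℓ - 1) * m - 1, b) ∨
          ladderIdx ℓ (tc, td) = ladderIdx ℓ (x + (ℓ - 1) * m - 1, b) + ℓ := by
        apply idx_cases_of_res_eq (by omega : 2 ≤ ℓ) hb htd1 (by rw [htres, hresr])
        · exact idx_le_of_le ht1
        · have := idx_le_of_le (ladderLT_le ht2)
          omega
      rcases hidxcases with hidxt | hidxt
      · -- t on the earlier ladder, below r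
        have hrowgt : x + (ℓ - 1) * m - 1 < tc := by
          rcases Nat.lt_or_ge (x + (ℓ - 1) * m - 1) tc with h | h
          · exact h
          · exfalso
            have heq : tc = x + (ℓ - 1) * m - 1 := by
              rcases ht1 with h1 | h1
              · omega
              · dsimp only at h1; omega
            -- then td = b, contradicting addability vs removability
            have : (ℓ - 1) * (td - 1) = (ℓ - 1) * (b - 1) := by
              unfold ladderIdx at hidxt
              dsimp only at hidxt
              omega
            have := Nat.eq_of_mul_eq_mul_left (show 0 < ℓ - 1 by omega) this
            rw [heq] at htd
            omega
        obtain ⟨j, hj1, hj2, hj3, hj4⟩ :=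
          ladder_param (by omega : 2 ≤ ℓ) (p := (x + (ℓ - 1) * m - 1, b)) (q := (tc, td))
            hb htd1 hidxt.symm hrowgt
        dsimp only at hj2 hj3 hj4
        apply hgood
        refine ⟨x + (ℓ - 1) * m - 1, td, j, by omega, htd1, hj1, by omega, ?_⟩
        have hcl : P.colLen td = tc - 1 := by
          apply colLen_eq_of htd1
          · right
            rcases htprev with h | h
            · omega
            · exact h
          · rw [show tc - 1 + 1 = tc by omega]
            omega
        omega
      · -- t on the ladder of (x,y), above it
        have hidxtp : ladderIdx ℓ (tc, td) = ladderIdx ℓ (x, y) := by omega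
        have hrowlt : tc < x := by
          rcases ht2 with h | h
          · omega
          · exact h.2
        obtain ⟨k, hk1, hk2, hk3, hk4⟩ :=
          ladder_param (by omega : 2 ≤ ℓ) (p := (tc, td)) (q := (x, y)) htd1 hy1
            hidxtp hrowlt
        dsimp only at hk2 hk3 hk4
        apply hgood
        refine ⟨tc, b, m + k, htc1, hb, by omega, by omega, ?_⟩
        have hsplit : (ℓ - 1) * (m + k) = (ℓ - 1) * m + (ℓ - 1) * k := Nat.mul_add _ _ _
        omega
    · -- the column just right of the gap gives a bad pair in P
      apply hgood
      refine ⟨x, b + 1, m, hx1, by omega, hm, by omega, ?_⟩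
      have hcl : P.colLen (b + 1) = x + (ℓ - 1) * m - 1 := by
        apply colLen_eq_of (by omega)
        · right
          omega
        · rw [show x + (ℓ - 1) * m - 1 + 1 = x + (ℓ - 1) * m by omega]
          omega
      omega
  · -- Case B : bad box in another row
    rw [if_neg hax] at hpart
    by_cases hby : b = y
    · rw [hby] at hpart hcol hb
      rw [colLen_rem_self hQ hx1 hyx.symm hnext] at hcol
      have ha2 : a + (ℓ - 1) * m = x := by omega
      have hrowa : a < x := by omega
      -- P.part a = y + m
      by_cases hB1 : P.part (a + 1) = y + m
      · apply hgood
        refine ⟨a + 1, y, m, by omega, hy1, hm, by omega, ?_⟩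
        have hcly : P.colLen y = x := by
          apply colLen_eq_of hy1
          · right; omega
          · omega
        omega
      · -- u = (a, y+m) is removable on the ladder of (x,y)
        have hresu : res ℓ (a, y + m) = res ℓ (x, y) := by
          have h1 : res ℓ (a + (ℓ - 1) * m, (y + m) - m) = res ℓ (a, y + m) :=
            res_shift (by omega) (by omega)
          rw [show (y + m) - m = y by omega, ha2] at h1
          exact h1.symm
        have hidxu : ladderIdx ℓ (a, y + m) = ladderIdx ℓ (x, y) := by
          have h1 : ladderIdx ℓ (a + (ℓ - 1) * m, (y + m) - m) = ladderIdx ℓ (a, y + m) :=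
            idx_shift (by omega)
          rw [show (y + m) - m = y by omega, ha2] at h1
          exact h1.symm
        have hmono := P.antitone a (a + 1) ha (by omega)
        have huR : (a, y + m) ∈ RemovableRes ℓ (res ℓ (x, y)) P :=
          mem_removableRes.mpr ⟨ha, by omega, by omega, hresu⟩
        have hltu : LadderLT ℓ (a, y + m) (x, y) := Or.inr ⟨hidxu, hrowa⟩
        have hnotnorm : ¬ NormalIn (LadderLE ℓ) (RemovableRes ℓ (res ℓ (x, y)) P)
            (AddableRes ℓ (res ℓ (x, y)) P) (a, y + m) := by
          intro hn
          have hle := hminn _ hn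
          rcases hle with h | h
          · omega
          · dsimp only at h; omega
        obtain ⟨⟨tc, td⟩, htA, ht1, ht2⟩ := extract_add hRf hAf hnorm huR hltu hnotnorm
        rw [mem_addableRes] at htA
        obtain ⟨htc1, htd, htprev, htres⟩ := htA
        have htd1 : 1 ≤ td := by omega
        -- t is on the same ladder, strictly between u and (x,y)
        have hidxt : ladderIdx ℓ (tc, td) = ladderIdx ℓ (a, y + m) := by
          have h1 := idx_le_of_le ht1
          have h2 := idx_le_of_le (ladderLT_le ht2)
          omega
        have hrowgt : a < tc := by
          rcases Nat.lt_or_ge a tc with h | h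
          · exact h
          · exfalso
            have heq : tc = a := by
              rcases ht1 with h1 | h1
              · omega
              · dsimp only at h1; omega
            -- then td = y + m, contradicting addability
            have : (ℓ - 1) * (td - 1) = (ℓ - 1) * (y + m - 1) := by
              unfold ladderIdx at hidxt
              dsimp only at hidxt
              omega
            have := Nat.eq_of_mul_eq_mul_left (show 0 < ℓ - 1 by omega) this
            rw [heq] at htd
            omega
        obtain ⟨j, hj1, hj2, hj3, hj4⟩ :=
          ladder_param (by omega : 2 ≤ ℓ) (p := (a, y + m)) (q := (tc, td))
            (by dsimp only; omega) htd1 hidxt.symm hrowgt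
        dsimp only at hj2 hj3 hj4
        have hjm : j < m := by
          have hrowle : tc < x := by
            rcases ht2 with h | h
            · omega
            · exact h.2
          have : (ℓ - 1) * j < (ℓ - 1) * m := by omega
          exact Nat.lt_of_mul_lt_mul_left this
        apply hgood
        refine ⟨a, td, j, ha, htd1, hj1, by omega, ?_⟩
        have hcl : P.colLen td = tc - 1 := by
          apply colLen_eq_of htd1
          · right
            rcases htprev with h | h
            · omega
            · exact h
          · rw [show tc - 1 + 1 = tc by omega]
            omega
        omega
    · rw [colLen_rem_ne hQ hx1 hyx.symm hnext hb hby] at hcol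
      exact hgood ⟨a, b, m, ha, hb, hm, hpart, hcol⟩

end YPartition



noncomputable section
namespace YPartition

/-- Recover the part function of the partition whose cells are `insert (x,y) P.cells`. -/
theorem part_desc_of_insert {P Q : YPartition} {x y : ℕ} (hx : 1 ≤ x)
    (hy : y = P.part x + 1) (hcells : Q.cells = insert (x, y) P.cells) :
    ∀ a, Q.part a = if a = x then y else P.part a := by
  intro a
  rcases Nat.eq_zero_or_pos a with rfl | ha
  · rw [if_neg (by omega), Q.zero_at_zero, P.zero_at_zero]
  have key : ∀ b, 1 ≤ b → (b ≤ Q.part a ↔ b ≤ if a = x then y else P.part a) := by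
    intro b hbpos
    rw [part_le_iff ha hbpos, hcells, Set.mem_insert_iff]
    simp only [Prod.mk.injEq, mem_cells_iff]
    by_cases hax : a = x
    · rw [if_pos hax]
      subst hax
      omega
    · rw [if_neg hax]
      omega
  have h1 : Q.part a ≤ (if a = x then y else P.part a) := by
    rcases Nat.eq_zero_or_pos (Q.part a) with h | h
    · omega
    · exact (key _ h).mp le_rfl
  have h2 : (if a = x then y else P.part a) ≤ Q.part a := by
    rcases Nat.eq_zero_or_pos (if a = x then y else P.part a) with h | h
    · omega
    · exact (key _ h).mpr le_rfl
  omega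

/-- Every node of the ladder crystal is good. -/
theorem node_good {ℓ : ℕ} (hl : 2 < ℓ) (P : YPartition) (h : LadderNode ℓ P) :
    ¬ Pbad ℓ P := by
  induction h with
  | refl => exact emptyP_not_bad ℓ
  | tail h1 h2 ih =>
    obtain ⟨i, hi, p, hcog, hcells⟩ := h2
    obtain ⟨x, y⟩ := p
    have hpadd := hcog.1.1
    have hires : res ℓ (x, y) = i := hpadd.2
    subst hires
    rw [mem_addableRes] at hpadd
    obtain ⟨hx1, hy, hprev, -⟩ := hpadd
    have hQ := part_desc_of_insert hx1 hy hcells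
    exact good_insert hl hcog hQ ih

/-- The partition obtained by removing a removable box. -/
def removeBoxP (P : YPartition) (x y : ℕ) (hx : 1 ≤ x) (hpx : P.part x = y)
    (hnext : P.part (x + 1) < y) : YPartition where
  part := fun a => if a = x then y - 1 else P.part a
  zero_at_zero := by
    rw [if_neg (by omega)]
    exact P.zero_at_zero
  antitone := by
    intro i j hi hij
    by_cases hix : i = x <;> by_cases hjx : j = x
    · rw [if_pos hix, if_pos hjx]
    · rw [if_pos hix, if_neg hjx]
      have := P.antitone (x + 1) j (by omega) (by omega)
      omega
    · rw [if_neg hix, if_pos hjx]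
      have := P.antitone i x hi (by omega)
      omega
    · rw [if_neg hix, if_neg hjx]
      exact P.antitone i j hi hij
  eventually_zero := by
    obtain ⟨N, hN⟩ := P.eventually_zero
    refine ⟨N + x + 1, fun i hi => ?_⟩
    rw [if_neg (by omega)]
    exact hN i (by omega)

/-- Every good partition is a node of the ladder crystal. -/
theorem good_node {ℓ : ℕ} (hl : 2 < ℓ) :
    ∀ n (P : YPartition), P.cells.ncard = n → ¬ Pbad ℓ P → LadderNode ℓ P := by
  intro n
  induction n using Nat.strong_induction_on with
  | _ n ih =>
    intro P hcard hgood
    rcases Nat.eq_zero_or_pos n with rfl | hn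
    · have hemp : P.cells = ∅ := (Set.ncard_eq_zero P.cells_finite).mp hcard
      rw [eq_empty_of_cells hemp]
      exact Relation.ReflTransGen.refl
    · have hne : P.cells.Nonempty := by
        rcases Set.eq_empty_or_nonempty P.cells with h | h
        · rw [h, Set.ncard_empty] at hcard
          omega
        · exact h
      obtain ⟨x, y, hcell, hnorm⟩ := exists_normal hl P hgood hne
      set NS : Set (ℕ × ℕ) := {q | NormalIn (LadderLE ℓ)
        (RemovableRes ℓ (res ℓ (x, y)) P) (AddableRes ℓ (res ℓ (x, y)) P) q} with hNSdef
      have hNSf : NS.Finite := (removableRes_finite ℓ (res ℓ (x, y)) P).subset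
        (fun q hq => hq.1)
      obtain ⟨⟨gx, gy⟩, hgNS, hgmin⟩ := exists_ladder_min (ℓ := ℓ) hNSf ⟨(x, y), hnorm⟩
      have hgRmem : (gx, gy) ∈ RemovableRes ℓ (res ℓ (x, y)) P := hgNS.1
      have hires : res ℓ (gx, gy) = res ℓ (x, y) := (mem_removableRes.mp hgRmem).2.2.2
      have hgR := mem_removableRes.mp hgRmem
      obtain ⟨hgx1, hgy, hgnext, -⟩ := hgR
      have hgy1 : 1 ≤ gy := by omega
      set Q : YPartition := removeBoxP P gx gy hgx1 hgy.symm hgnext with hQdef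
      have hQ : ∀ a, Q.part a = if a = gx then gy - 1 else P.part a := fun a => rfl
      have hQcells : Q.cells = P.cells \ {(gx, gy)} := cells_rem hQ hgx1 hgy.symm hgnext
      have hgcell : (gx, gy) ∈ P.cells := mk_cell hgx1 hgy1 (by omega)
      have hnotmem : (gx, gy) ∉ Q.cells := by
        rw [hQcells]
        simp
      have hPcells : P.cells = insert (gx, gy) Q.cells := by
        rw [hQcells, Set.insert_diff_singleton, Set.insert_eq_self.mpr hgcell]
      have hQcard : Q.cells.ncard = n - 1 := by
        have h1 : P.cells.ncard = Q.cells.ncard + 1 := by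
          rw [hPcells, Set.ncard_insert_of_notMem hnotmem
            (P.cells_finite.subset (by rw [hQcells]; exact Set.diff_subset))]
        omega
      -- goodness statements at the residue of the good box
      have hnormg : NormalIn (LadderLE ℓ) (RemovableRes ℓ (res ℓ (gx, gy)) P)
          (AddableRes ℓ (res ℓ (gx, gy)) P) (gx, gy) := by
        rw [hires]
        exact hgNS
      have hleftg : ∀ q, NormalIn (LadderLE ℓ) (RemovableRes ℓ (res ℓ (gx, gy)) P)
          (AddableRes ℓ (res ℓ (gx, gy)) P) q → LadderLE ℓ (gx, gy) q := by
        intro q hq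
        rw [hires] at hq
        exact hgmin q hq
      have hQgood : ¬ Pbad ℓ Q := good_remove hl ⟨hnormg, hleftg⟩ hQ hgood
      have hnodeQ := ih (n - 1) (by omega) Q hQcard hQgood
      -- flip: the good box is cogood for Q
      have hremM := rem_marks_rem (show 2 ≤ ℓ by omega) hQ hgx1 hgy.symm hgnext
      have haddM := rem_marks_add (show 2 ≤ ℓ by omega) hQ hgx1 hgy.symm hgnext
      have hflip := flip_cogood (show 2 ≤ ℓ by omega)
        (removableRes_finite ℓ (res ℓ (gx, gy)) P)
        (addableRes_finite ℓ (res ℓ (gx, gy)) P)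
        (rem_add_disjoint ℓ (res ℓ (gx, gy)) P)
        (fun s hs => by
          rcases hs with h | h
          · exact (removable_pos h).2
          · exact (addable_pos h).2)
        hnormg hleftg
      have hcog : LadderCogood ℓ (res ℓ (gx, gy)) Q (gx, gy) := by
        constructor
        · show ConormalIn (LadderLE ℓ) (RemovableRes ℓ (res ℓ (gx, gy)) Q)
            (AddableRes ℓ (res ℓ (gx, gy)) Q) (gx, gy)
          rw [hremM, haddM]
          exact hflip.1
        · intro q hq
          have hq' : ConormalIn (LadderLE ℓ) (RemovableRes ℓ (res ℓ (gx, gy)) Q)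
              (AddableRes ℓ (res ℓ (gx, gy)) Q) q := hq
          rw [hremM, haddM] at hq'
          exact hflip.2 q hq'
      apply Relation.ReflTransGen.tail hnodeQ
      exact ⟨res ℓ (gx, gy), res_lt (by omega) _, (gx, gy), hcog, hPcells⟩

end YPartition

open YPartition

theorem statement19' (ℓ : ℕ) (hℓ : 2 < ℓ) (lam : YPartition) :
    (LadderNode ℓ lam ↔
      ¬ ∃ p : ℕ × ℕ, p ∈ lam.cells ∧ lam.hook p.1 p.2 = ℓ * lam.arm p.1 p.2) ∧
    (IsLPartition ℓ lam → LadderNode ℓ lam) := by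
  have hiff : LadderNode ℓ lam ↔
      ¬ ∃ p : ℕ × ℕ, p ∈ lam.cells ∧ lam.hook p.1 p.2 = ℓ * lam.arm p.1 p.2 := by
    constructor
    · intro hnode hex
      exact node_good hℓ lam hnode ((pbad_iff (by omega) lam).mpr hex)
    · intro hnotbad
      exact good_node hℓ lam.cells.ncard lam rfl
        (fun hbad => hnotbad ((pbad_iff (by omega) lam).mp hbad))
  refine ⟨hiff, fun hLp => hiff.mpr ?_⟩
  intro hex
  have hbad := (pbad_iff (by omega) lam).mpr hex
  obtain ⟨a, b, m, ha, hb, hm, hpart, hcol⟩ := hbad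
  apply hLp
  have hcl : a ≤ lam.colLen b := (le_colLen_iff hb ha).mpr (by omega)
  have hkey := sub_one_mul_add ℓ m (by omega)
  have harm : lam.arm a b = m := by
    unfold arm
    omega
  refine ⟨(a, b), mk_cell ha hb (by omega), ?_, Or.inr ?_⟩
  · refine ⟨m, ?_⟩
    show lam.hook a b = ℓ * m
    unfold hook
    omega
  · show lam.leg a b < (ℓ - 1) * lam.arm a b
    unfold leg
    rw [harm]
    omega

/-- `λ` is a node of `B(Λ₀)^L` iff no box `(i,j)` of `λ` satisfies
`h_(i,j) = ℓ · arm(i,j)`; moreover every L-partition is a node of `B(Λ₀)^L`. -/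
theorem statement19 (ℓ : ℕ) (hℓ : 2 < ℓ) (lam : YPartition) :
    (LadderNode ℓ lam ↔
      ¬ ∃ p : ℕ × ℕ, p ∈ lam.cells ∧ lam.hook p.1 p.2 = ℓ * lam.arm p.1 p.2) ∧
    (IsLPartition ℓ lam → LadderNode ℓ lam) := statement19' ℓ hℓ lam
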